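/- arXiv:1401.0964 — 6 statements merged into one kernel-verified Lean document; each statement's English description precedes it below -/
import Mathlib

section
/- Let p be a prime, f(X) = a₀X² + a₁X + a₂ ∈ F_p[X] with a₀ ≠ 0 and f square-free (i.e., f has no repeated roots, equivalently a₁² - 4a₀a₂ ≠ 0). For λ ∈ F_p with λ ≠ 0 and λ ≠ 1, the polynomial Q_λ(X,Y) = f(X) - λ·f(Y) ∈ F_p[X,Y] is irreducible over the algebraic closure of F_p. -/
open Polynomial in
theorem my_coeff_cmp {K : Type*} [Field K] {c d A B E : K}
    (h : C (c^2) * X^2 + C (2*c*d) * X + C (d^2) = C A * X^2 + C B * X + C E) :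
    c^2 = A ∧ 2*c*d = B ∧ d^2 = E := by
  refine ⟨?_, ?_, ?_⟩
  · have h2 := Polynomial.ext_iff.mp h 2
    simp only [coeff_add, coeff_C_mul, coeff_X_pow, coeff_X, coeff_C] at h2
    norm_num at h2; exact h2
  · have h1 := Polynomial.ext_iff.mp h 1
    simp only [coeff_add, coeff_C_mul, coeff_X_pow, coeff_X, coeff_C] at h1
    norm_num at h1; exact h1
  · have h0 := Polynomial.ext_iff.mp h 0
    simp only [coeff_add, coeff_C_mul, coeff_X_pow, coeff_X, coeff_C] at h0
    norm_num at h0; exact h0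

open Polynomial in
theorem my_not_square {K : Type*} [Field K] {A₂ A₁ A₀ : K} (hA₂ : A₂ ≠ 0)
    (hdisc : A₁^2 - 4*A₂*A₀ ≠ 0) (s : FractionRing (Polynomial K)) :
    algebraMap (Polynomial K) (FractionRing (Polynomial K))
      (C A₂ * X^2 + C A₁ * X + C A₀) ≠ s^2 := by
  intro hs
  set D : Polynomial K := C A₂ * X^2 + C A₁ * X + C A₀ with hD
  have hint : IsIntegral (Polynomial K) s := by
    refine ⟨Polynomial.X^2 - Polynomial.C D, monic_X_pow_sub_C D (by norm_num), ?_⟩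
    simp [hs.symm]
  obtain ⟨t, ht⟩ := IsIntegrallyClosed.isIntegral_iff.mp hint
  have hinj : Function.Injective (algebraMap (Polynomial K) (FractionRing (Polynomial K))) :=
    IsFractionRing.injective _ _
  have ht2 : t^2 = D := hinj (by rw [map_pow, ht, ← hs])
  have hDdeg : D.natDegree = 2 := natDegree_quadratic hA₂
  have htdeg : t.natDegree = 1 := by
    have hnp := natDegree_pow t 2
    rw [ht2, hDdeg] at hnp; omega
  have htX : t = C (t.coeff 1) * X + C (t.coeff 0) :=
    eq_X_add_C_of_natDegree_le_one (by omega)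
  have hexp : t^2 = C ((t.coeff 1)^2) * X^2 + C (2*(t.coeff 1)*(t.coeff 0)) * X
      + C ((t.coeff 0)^2) := by
    conv_lhs => rw [htX]
    simp only [C_mul, C_add, C_pow, map_ofNat]
    ring
  rw [hexp, hD] at ht2
  obtain ⟨e2, e1, e0⟩ := my_coeff_cmp ht2
  apply hdisc
  rw [← e2, ← e1, ← e0]; ring

open Polynomial in
theorem my_aux {K : Type*} [Field K] (b₀ b₁ b₂ l : K) (hb₀ : b₀ ≠ 0)
    (hsf : b₁^2 - 4*b₀*b₂ ≠ 0) (hl0 : l ≠ 0) (hl1 : l ≠ 1) (h2 : (2:K) ≠ 0) :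
    Irreducible ((C (C b₀)) * X^2 + C (C b₁) * X +
      C (C b₂ - C l * (C b₀ * X^2 + C b₁ * X + C b₂)) : Polynomial (Polynomial K)) := by
  set c₂ : Polynomial K := C b₂ - C l * (C b₀ * X^2 + C b₁ * X + C b₂) with hc₂
  set F := FractionRing (Polynomial K)
  set α := algebraMap (Polynomial K) F with hα
  have hinj : Function.Injective α := IsFractionRing.injective (Polynomial K) F
  have hprim : (C (C b₀) * X^2 + C (C b₁) * X + C c₂ : Polynomial (Polynomial K)).IsPrimitive := by
    intro r hr
    obtain ⟨q, hq⟩ := hr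
    have h2 : C b₀ = r * q.coeff 2 := by
      have := congrArg (fun p => Polynomial.coeff p 2) hq
      simpa [coeff_X_pow] using this
    exact isUnit_of_dvd_unit ⟨q.coeff 2, h2⟩ (isUnit_C.mpr (isUnit_iff_ne_zero.mpr hb₀))
  refine hprim.irreducible_of_irreducible_map_of_injective hinj ?_
  have hmap : (C (C b₀) * X^2 + C (C b₁) * X + C c₂ : Polynomial (Polynomial K)).map α
      = C (α (C b₀)) * X^2 + C (α (C b₁)) * X + C (α c₂) := by
    simp [Polynomial.map_add, Polynomial.map_mul, Polynomial.map_pow]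
  rw [hmap]
  have hCinj : ∀ x : Polynomial K, x ≠ 0 → α x ≠ 0 := fun x hx h =>
    hx (hinj (by simpa using h))
  have hA : α (C b₀) ≠ 0 := hCinj _ (C_ne_zero.mpr hb₀)
  have hdeg : (C (α (C b₀)) * X^2 + C (α (C b₁)) * X + C (α c₂) : Polynomial F).natDegree = 2 :=
    natDegree_quadratic hA
  rw [irreducible_iff_roots_eq_zero_of_degree_le_three (by omega) (by omega),
    Multiset.eq_zero_iff_forall_notMem]
  intro x hx
  rw [mem_roots, IsRoot] at hx
  · have hx' : α (C b₀) * (x * x) + α (C b₁) * x + α c₂ = 0 := by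
      have := hx
      simp only [eval_add, eval_mul, eval_pow, eval_C, eval_X] at this
      linear_combination this
    refine quadratic_ne_zero_of_discrim_ne_sq ?_ x hx'
    intro s hs
    have hR : (C b₁)^2 - 4 * C b₀ * c₂
        = C (4*l*b₀^2) * X^2 + C (4*l*b₀*b₁) * X + C (4*l*b₀*b₂ + (b₁^2 - 4*b₀*b₂)) := by
      rw [hc₂]
      simp only [C_mul, C_add, C_sub, C_pow, map_ofNat]
      ring
    have hDdis : discrim (α (C b₀)) (α (C b₁)) (α c₂)
        = α (C (4*l*b₀^2) * X^2 + C (4*l*b₀*b₁) * X + C (4*l*b₀*b₂ + (b₁^2 - 4*b₀*b₂))) := by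
      rw [discrim, ← hR]
      simp [map_mul, map_sub, map_pow, map_ofNat]
    rw [hDdis] at hs
    have hA₂ : (4*l*b₀^2 : K) ≠ 0 := by
      have h4 : (4:K) = 2*2 := by norm_num
      simp [h4, h2, hl0, hb₀, mul_eq_zero, pow_eq_zero_iff]
    have hdisc : (4*l*b₀*b₁)^2 - 4*(4*l*b₀^2)*(4*l*b₀*b₂ + (b₁^2 - 4*b₀*b₂)) ≠ 0 := by
      have hform : (4*l*b₀*b₁)^2 - 4*(4*l*b₀^2)*(4*l*b₀*b₂ + (b₁^2 - 4*b₀*b₂))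
          = (16*l*b₀^2) * ((l-1) * (b₁^2 - 4*b₀*b₂)) := by ring
      rw [hform]
      have h16 : (16:K) ≠ 0 := by
        have : (16:K) = 2^4 := by norm_num
        rw [this]; exact pow_ne_zero _ h2
      exact mul_ne_zero (mul_ne_zero (mul_ne_zero h16 hl0) (pow_ne_zero _ hb₀))
        (mul_ne_zero (sub_ne_zero.mpr hl1) hsf)
    exact my_not_square hA₂ hdisc s hs
  · intro h0
    rw [h0] at hdeg
    simp at hdeg

theorem my_two_cases : ∀ x : ZMod 2, x = 0 ∨ x = 1 := by decide

open MvPolynomial in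
theorem stmt_1 (p : ℕ) [Fact p.Prime] (a₀ a₁ a₂ lam : ZMod p)
    (ha₀ : a₀ ≠ 0) (hsf : a₁ ^ 2 - 4 * a₀ * a₂ ≠ 0)
    (hlam0 : lam ≠ 0) (hlam1 : lam ≠ 1) :
    Irreducible
      ((C (algebraMap (ZMod p) (AlgebraicClosure (ZMod p)) a₀) * (X 0) ^ 2 +
        C (algebraMap (ZMod p) (AlgebraicClosure (ZMod p)) a₁) * X 0 +
        C (algebraMap (ZMod p) (AlgebraicClosure (ZMod p)) a₂)) -
       C (algebraMap (ZMod p) (AlgebraicClosure (ZMod p)) lam) *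
        (C (algebraMap (ZMod p) (AlgebraicClosure (ZMod p)) a₀) * (X 1) ^ 2 +
         C (algebraMap (ZMod p) (AlgebraicClosure (ZMod p)) a₁) * X 1 +
         C (algebraMap (ZMod p) (AlgebraicClosure (ZMod p)) a₂)) :
        MvPolynomial (Fin 2) (AlgebraicClosure (ZMod p))) := by
  have hp2 : p ≠ 2 := by
    rintro rfl
    rcases my_two_cases lam with h | h <;> [exact hlam0 h; exact hlam1 h]
  set K := AlgebraicClosure (ZMod p)
  set φ := algebraMap (ZMod p) K with hφ
  have hφinj : Function.Injective φ := (algebraMap (ZMod p) K).injective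
  have h2K : (2 : K) ≠ 0 := by
    have hchar : CharP K p := inferInstance
    have : ¬ (p ∣ 2) := fun h =>
      hp2 ((Nat.prime_dvd_prime_iff_eq Fact.out Nat.prime_two).mp h)
    exact fun h => this (by
      have := (CharP.cast_eq_zero_iff K p 2).mp (by exact_mod_cast h)
      exact this)
  -- nonvanishing facts in K
  have hb₀ : φ a₀ ≠ 0 := fun h => ha₀ (hφinj (by simpa using h))
  have hsf' : (φ a₁)^2 - 4*(φ a₀)*(φ a₂) ≠ 0 := by
    intro h
    apply hsf
    apply hφinj
    rw [map_sub, map_pow, map_mul, map_mul, map_ofNat, map_zero]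
    exact h
  have hl0 : φ lam ≠ 0 := fun h => hlam0 (hφinj (by simpa using h))
  have hl1 : φ lam ≠ 1 := fun h => hlam1 (hφinj (by rw [h, map_one]))
  -- the equivalence
  let i : MvPolynomial (Fin 1) K ≃ₐ[K] Polynomial K :=
    (finSuccEquiv K 0).trans (Polynomial.mapAlgEquiv (isEmptyAlgEquiv K (Fin 0)))
  let e : MvPolynomial (Fin 2) K ≃ₐ[K] Polynomial (Polynomial K) :=
    (finSuccEquiv K 1).trans (Polynomial.mapAlgEquiv i)
  have hi0 : i (X 0) = Polynomial.X := by
    have h' : (finSuccEquiv K 0) (X 0) = Polynomial.X := finSuccEquiv_X_zero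
    simp [i, h', Polynomial.mapAlgEquiv]
  have hiC : ∀ a : K, i (C a) = Polynomial.C a := by
    intro a
    have h' : (finSuccEquiv K 0) (C a) = Polynomial.C (C a) := by
      simp [finSuccEquiv_apply]
    have h'' : isEmptyAlgEquiv K (Fin 0) (C a) = a := by
      rw [← isEmptyAlgEquiv_symm_apply, AlgEquiv.apply_symm_apply]
    simp [i, h', h'', Polynomial.mapAlgEquiv]
  have h0 : e (X 0) = Polynomial.X := by
    simp [e, finSuccEquiv_X_zero, Polynomial.mapAlgEquiv]
  have h1 : e (X 1) = Polynomial.C Polynomial.X := by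
    have hs : (finSuccEquiv K 1) (X 1) = Polynomial.C (X 0) :=
      finSuccEquiv_X_succ (j := 0)
    simp [e, hs, Polynomial.mapAlgEquiv, hi0]
  have hC : ∀ a : K, e (C a) = Polynomial.C (Polynomial.C a) := by
    intro a
    have h' : (finSuccEquiv K 1) (C a) = Polynomial.C (C a) := by
      simp [finSuccEquiv_apply]
    simp [e, h', Polynomial.mapAlgEquiv, hiC]
  rw [← MulEquiv.irreducible_iff (e : MvPolynomial (Fin 2) K ≃* Polynomial (Polynomial K))]
  have heQ : (e : MvPolynomial (Fin 2) K ≃* Polynomial (Polynomial K))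
      ((C (φ a₀) * (X 0) ^ 2 + C (φ a₁) * X 0 + C (φ a₂)) -
       C (φ lam) * (C (φ a₀) * (X 1) ^ 2 + C (φ a₁) * X 1 + C (φ a₂)))
      = (Polynomial.C (Polynomial.C (φ a₀))) * Polynomial.X^2
          + Polynomial.C (Polynomial.C (φ a₁)) * Polynomial.X +
        Polynomial.C (Polynomial.C (φ a₂)
          - Polynomial.C (φ lam) * (Polynomial.C (φ a₀) * Polynomial.X^2
            + Polynomial.C (φ a₁) * Polynomial.X + Polynomial.C (φ a₂))) := by
    show e _ = _
    rw [map_sub, map_add, map_add, map_mul, map_mul, map_mul, map_pow,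
      map_add, map_add, map_mul, map_mul, map_pow, h0, h1, hC, hC, hC, hC]
    simp only [Polynomial.C_mul, Polynomial.C_add, Polynomial.C_sub, Polynomial.C_pow]
    ring
  rw [heQ]
  exact my_aux (φ a₀) (φ a₁) (φ a₂) (φ lam) hb₀ hsf' hl0 hl1 h2K
end

section
/- Let p be a prime, m ≥ 1, and let V₁, ..., V_m be real numbers with p > V_i ≥ 1 for all i and V₁⋯V_m > p^{m-1}. Then for any integers b₁, ..., b_m there exists an integer v with gcd(v, p) = 1 such that for each i = 1, ..., m, the least absolute residue of b_i·v modulo p has absolute value at most V_i. -/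
open MeasureTheory Submodule Finset
open scoped ENNReal NNReal

theorem stmt_2 (p m : ℕ) (hp : p.Prime) (hm : 1 ≤ m) (V : Fin m → ℝ)
    (hV : ∀ i, 1 ≤ V i ∧ V i < p) (hprod : (p : ℝ) ^ (m - 1) < ∏ i, V i)
    (b : Fin m → ℤ) :
    ∃ v : ℤ, Int.gcd v p = 1 ∧
      ∀ i, ∃ k : ℤ, (|b i * v - k * p| : ℝ) ≤ V i := by
  classical
  haveI : NeZero m := ⟨by omega⟩
  haveI : NeZero p := ⟨hp.pos.ne'⟩
  have hp1 : (1 : ℤ) < p := by exact_mod_cast hp.one_lt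
  have hp0 : (0 : ℤ) < p := by omega
  haveI : Fact p.Prime := ⟨hp⟩
  -- trivial case : all `b i` divisible by `p`
  by_cases hball : ∀ i, (p : ℤ) ∣ b i
  · refine ⟨1, by simp, fun i => ⟨b i / p, ?_⟩⟩
    have h0 : (b i * 1 - b i / p * p : ℤ) = 0 := by
      have := Int.ediv_mul_cancel (hball i)
      omega
    have h1 : ((b i * 1 - b i / p * p : ℤ) : ℝ) = 0 := by rw [h0]; simp
    push_cast at h1 ⊢
    rw [h1]
    have := (hV i).1
    simp only [abs_zero]
    linarith
  push_neg at hball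
  obtain ⟨i₀, hb0⟩ := hball
  -- inverse of `b i₀` mod `p`
  set β : ZMod p := ((b i₀ : ZMod p)) with hβdef
  have hβ : β ≠ 0 := by
    rw [hβdef, Ne, ZMod.intCast_zmod_eq_zero_iff_dvd]
    exact hb0
  set u : ℕ := (β⁻¹).val with hudef
  have hu : ((u : ℕ) : ZMod p) = β⁻¹ := by
    simp [hudef, ZMod.natCast_val, ZMod.cast_id]
  have hpu : ¬ (p : ℤ) ∣ (u : ℤ) := by
    intro h
    have : ((u : ℤ) : ZMod p) = 0 := (ZMod.intCast_zmod_eq_zero_iff_dvd _ _).mpr h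
    rw [Int.cast_natCast, hu] at this
    exact inv_ne_zero hβ this
  set c : Fin m → ℤ := fun i => b i * u % p with hcdef
  have hc : ∀ i, (p : ℤ) ∣ (b i * u - c i) := by
    intro i
    refine ⟨b i * u / p, ?_⟩
    rw [hcdef]
    simp only
    rw [Int.emod_def]
    ring
  have hc0 : c i₀ = 1 := by
    have h1 : (p : ℤ) ∣ (b i₀ * u - 1) := by
      have h2 : ((b i₀ * (u : ℤ) - 1 : ℤ) : ZMod p) = 0 := by
        push_cast
        rw [hu, ← hβdef, mul_inv_cancel₀ hβ, sub_self]
      exact (ZMod.intCast_zmod_eq_zero_iff_dvd _ _).mp h2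
    obtain ⟨t, ht⟩ := h1
    have hbt : (b i₀ * (u : ℤ)) = 1 + p * t := by omega
    rw [hcdef]
    simp only
    rw [hbt, Int.add_mul_emod_self_left, Int.emod_eq_of_lt (by norm_num) hp1]
  -- the lattice basis
  set σ : Equiv.Perm (Fin m) := Equiv.swap 0 i₀ with hσdef
  set g : Fin m → Fin m → ℤ := fun j i => if j = 0 then c i else if i = σ j then (p : ℤ) else 0
    with hgdef
  set f : Fin m → Fin m → ℝ := fun j i => ((g j i : ℤ) : ℝ) with hfdef
  have hgp : ∀ j, j ≠ 0 → ∀ i, (p : ℤ) ∣ g j i := by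
    intro j hj i
    simp only [hgdef, if_neg hj]
    split
    · exact dvd_rfl
    · exact dvd_zero _
  -- the determinant
  have hdetA : (Matrix.of fun j k => f j (σ k)).det = (p : ℝ) ^ (m - 1) := by
    rw [Matrix.det_of_upperTriangular]
    · have hdiag : ∀ j : Fin m, (Matrix.of fun j k => f j (σ k)) j j
          = if j = 0 then 1 else (p : ℝ) := by
        intro j
        by_cases hj : j = 0
        · subst hj
          simp [hfdef, hgdef, hσdef, Equiv.swap_apply_left, hc0]
        · simp [hfdef, hgdef, hj]
      calc (∏ j, (Matrix.of fun j k => f j (σ k)) j j)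
          = ∏ j, (if j = 0 then 1 else (p : ℝ)) := Finset.prod_congr rfl fun j _ => hdiag j
        _ = (p : ℝ) ^ (m - 1) := by
            rw [← Finset.mul_prod_erase Finset.univ _ (Finset.mem_univ 0), if_pos rfl, one_mul]
            rw [Finset.prod_congr rfl (fun j hj => if_neg (Finset.mem_erase.mp hj).1),
              Finset.prod_const, Finset.card_erase_of_mem (Finset.mem_univ 0),
              Finset.card_univ, Fintype.card_fin]
    · intro i j hij
      have hi0 : i ≠ 0 := fun h => by subst h; simp only [id] at hij; rw [Fin.lt_def, Fin.val_zero] at hij; omega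
      simp only [Matrix.of_apply, hfdef, hgdef, if_neg hi0]
      rw [if_neg]
      · norm_num
      · exact fun h => (ne_of_lt hij) (σ.injective h)
  have hdet : |(Matrix.of f).det| = (p : ℝ) ^ (m - 1) := by
    have h1 := Matrix.det_permute' σ (Matrix.of f)
    have h2 : ((Matrix.of f).submatrix id ⇑σ) = Matrix.of (fun j k => f j (σ k)) := rfl
    rw [h2, hdetA] at h1
    rcases Int.units_eq_one_or (Equiv.Perm.sign σ) with h | h <;> rw [h] at h1
    · simp only [Units.val_one, Int.cast_one, one_mul] at h1
      rw [← h1, abs_of_nonneg (by positivity)]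
    · simp only [Units.val_neg, Units.val_one, Int.cast_neg, Int.cast_one, neg_one_mul] at h1
      rw [show (Matrix.of f).det = -((p:ℝ)^(m-1)) by linarith, abs_neg,
        abs_of_nonneg (by positivity)]
  have hdet0 : (Matrix.of f).det ≠ 0 := by
    intro h
    rw [h, abs_zero] at hdet
    exact (pow_ne_zero _ (Nat.cast_ne_zero.mpr hp.pos.ne' : (p:ℝ) ≠ 0)) hdet.symm
  have hli : LinearIndependent ℝ f := by
    have hunit : IsUnit (Matrix.of f) :=
      (Matrix.isUnit_iff_isUnit_det _).mpr (isUnit_iff_ne_zero.mpr hdet0)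
    exact Matrix.linearIndependent_rows_iff_isUnit.mpr hunit
  let bas : Module.Basis (Fin m) ℝ (Fin m → ℝ) :=
    basisOfLinearIndependentOfCardEqFinrank hli
      (by simp [Module.finrank_fintype_fun_eq_card])
  have hbas : ⇑bas = f := coe_basisOfLinearIndependentOfCardEqFinrank _ _
  set s : Set (Fin m → ℝ) := Set.pi Set.univ (fun i => Set.Icc (-(V i)) (V i)) with hsdef
  have h_symm : ∀ x ∈ s, -x ∈ s := by
    intro x hx i _
    have h := hx i (Set.mem_univ i)
    simp only [Set.mem_Icc] at h ⊢
    constructor <;> simp only [Pi.neg_apply] <;> linarith [h.1, h.2]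
  have h_conv : Convex ℝ s := convex_pi fun i _ => convex_Icc _ _
  have hVpos : ∀ i, (0:ℝ) < V i := fun i => lt_of_lt_of_le one_pos (hV i).1
  have hvols : volume s = ENNReal.ofReal (∏ i, (2 * V i)) := by
    rw [hsdef, volume_pi_pi]
    simp_rw [Real.volume_Icc]
    rw [← ENNReal.ofReal_prod_of_nonneg (fun i _ => by linarith [hVpos i])]
    congr 1
    exact Finset.prod_congr rfl fun i _ => by ring
  have fund := ZSpan.isAddFundamentalDomain' bas volume
  have hvolF : volume (ZSpan.fundamentalDomain bas) = ENNReal.ofReal ((p:ℝ)^(m-1)) := by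
    rw [ZSpan.volume_fundamentalDomain, hbas, hdet]
  have hineq : volume (ZSpan.fundamentalDomain bas)
      * 2 ^ (Module.finrank ℝ (Fin m → ℝ)) < volume s := by
    rw [hvolF, hvols, Module.finrank_fintype_fun_eq_card, Fintype.card_fin]
    have h2 : (2 : ℝ≥0∞) ^ m = ENNReal.ofReal ((2:ℝ) ^ m) := by
      rw [ENNReal.ofReal_pow (by norm_num : (0:ℝ) ≤ 2)]
      norm_num
    rw [h2, ← ENNReal.ofReal_mul (by positivity)]
    have hpos : (0:ℝ) < ∏ i, (2 * V i) := Finset.prod_pos fun i _ => by linarith [hVpos i]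
    rw [ENNReal.ofReal_lt_ofReal_iff hpos]
    have hprod2 : ∏ i, (2 * V i) = 2 ^ m * ∏ i, V i := by
      rw [Finset.prod_mul_distrib, Finset.prod_const, Finset.card_univ, Fintype.card_fin]
    rw [hprod2]
    have h2m : (0:ℝ) < 2 ^ m := by positivity
    nlinarith [hprod, h2m]
  haveI : Countable (↥((span ℤ (Set.range ⇑bas)).toAddSubgroup)) := by
    change Countable (↥(span ℤ (Set.range ⇑bas)))
    infer_instance
  obtain ⟨x, hx0, hxs⟩ :=
    exists_ne_zero_mem_lattice_of_measure_mul_two_pow_lt_measure fund h_symm h_conv hineq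
  have hxmem : (x : Fin m → ℝ) ∈ span ℤ (Set.range f) := by
    rw [← hbas]
    have := x.2
    rwa [Submodule.mem_toAddSubgroup] at this
  rw [mem_span_range_iff_exists_fun] at hxmem
  obtain ⟨n, hn⟩ := hxmem
  set y : Fin m → ℤ := fun i => ∑ j, n j * g j i with hydef
  have hxy : ∀ i, (x : Fin m → ℝ) i = ((y i : ℤ) : ℝ) := by
    intro i
    rw [← hn]
    simp only [Finset.sum_apply, Pi.smul_apply, hfdef, zsmul_eq_mul, hydef]
    push_cast
    rfl
  have hybound : ∀ i, |((y i : ℤ) : ℝ)| ≤ V i := by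
    intro i
    have h := hxs i (Set.mem_univ i)
    rw [hxy i] at h
    simp only [Set.mem_Icc] at h
    exact abs_le.mpr ⟨h.1, h.2⟩
  have hyd : ∀ i, (p:ℤ) ∣ (y i - n 0 * c i) := by
    intro i
    have hsplit : y i = n 0 * g 0 i + ∑ j ∈ Finset.univ.erase 0, n j * g j i :=
      (Finset.add_sum_erase _ _ (Finset.mem_univ 0)).symm
    have hg0 : g 0 i = c i := if_pos rfl
    rw [hsplit, hg0, add_sub_cancel_left]
    exact Finset.dvd_sum fun j hj => Dvd.dvd.mul_left (hgp j (Finset.mem_erase.mp hj).1 i) (n j)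
  have hn0 : ¬ (p:ℤ) ∣ n 0 := by
    intro hdvd
    have hy0 : ∀ i, y i = 0 := by
      intro i
      have hdiv : (p:ℤ) ∣ y i := by
        have he : y i = (y i - n 0 * c i) + n 0 * c i := by ring
        rw [he]
        exact dvd_add (hyd i) (Dvd.dvd.mul_right hdvd _)
      refine Int.eq_zero_of_abs_lt_dvd hdiv ?_
      have h1 : |((y i : ℤ):ℝ)| < (p:ℝ) := lt_of_le_of_lt (hybound i) (hV i).2
      rw [← Int.cast_abs] at h1
      exact_mod_cast h1
    apply hx0
    have hzero : (x : Fin m → ℝ) = 0 := funext fun i => by rw [hxy i, hy0 i]; simp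
    exact (ZeroMemClass.coe_eq_zero).mp hzero
  have hpZ : Prime (p:ℤ) := Nat.prime_iff_prime_int.mp hp
  have hpv : ¬ (p:ℤ) ∣ (n 0 * u) := by
    intro h
    rcases hpZ.dvd_mul.mp h with h | h
    · exact hn0 h
    · exact hpu h
  refine ⟨n 0 * u, ?_, ?_⟩
  · exact Int.isCoprime_iff_gcd_eq_one.mp ((hpZ.coprime_iff_not_dvd.mpr hpv).symm)
  · intro i
    have hdvd : (p:ℤ) ∣ (b i * (n 0 * u) - y i) := by
      have he : b i * (n 0 * u) - y i = n 0 * (b i * u - c i) - (y i - n 0 * c i) := by ring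
      rw [he]
      exact dvd_sub (Dvd.dvd.mul_left (hc i) _) (hyd i)
    refine ⟨(b i * (n 0 * u) - y i) / p, ?_⟩
    have hk : b i * (n 0 * u) - (b i * (n 0 * u) - y i) / p * p = y i := by
      have := Int.ediv_mul_cancel hdvd
      omega
    have h2 : (|(b i * (n 0 * u) - (b i * (n 0 * u) - y i) / p * p : ℤ)| : ℝ) ≤ V i := by
      rw [hk]
      exact_mod_cast hybound i
    refine le_trans (le_of_eq ?_) h2
    push_cast
    ring_nf
end

section
/- Let ν ≥ 1 and d ≥ 1 be integers. Suppose x = (x₁, ..., x_ν) and y = (y₁, ..., y_ν) are vectors of positive integers such that the polynomial identity ∏_{i=1}^ν (x_i^d + Σ_{k=0}^{d-1} Z_{d-k} x_i^k) = ∏_{i=1}^ν (y_i^d + Σ_{k=0}^{d-1} Z_{d-k} y_i^k) holds identically in ℤ[Z₁, ..., Z_d]. Then (y₁, ..., y_ν) is a permutation of (x₁, ..., x_ν). -/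
lemma exists_perm_of_map_univ_eq {n : ℕ} {α : Type*} [LinearOrder α] {x y : Fin n → α}
    (h : Multiset.map y Finset.univ.val = Multiset.map x Finset.univ.val) :
    ∃ σ : Equiv.Perm (Fin n), y = x ∘ σ := by
  refine ⟨(Tuple.sort y).symm.trans (Tuple.sort x), ?_⟩
  have hperm : List.Perm (List.ofFn y) (List.ofFn x) := by
    rw [Fin.univ_val_map, Fin.univ_val_map] at h
    exact Multiset.coe_eq_coe.mp h
  have hkey : y ∘ Tuple.sort y = x ∘ Tuple.sort x := by
    apply List.ofFn_injective
    exact List.Perm.eq_of_sortedLE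
      (Tuple.monotone_sort y).sortedLE_ofFn
      (Tuple.monotone_sort x).sortedLE_ofFn
      (((Equiv.Perm.ofFn_comp_perm _ y).trans hperm).trans
        (Equiv.Perm.ofFn_comp_perm _ x).symm)
  funext i
  have := congrFun hkey ((Tuple.sort y).symm i)
  simpa using this

open MvPolynomial in
theorem stmt_4 (ν d : ℕ) (hν : 1 ≤ ν) (hd : 1 ≤ d)
    (x y : Fin ν → ℕ) (hx : ∀ i, 1 ≤ x i) (hy : ∀ i, 1 ≤ y i)
    (h : (∏ i, (C ((x i : ℤ) ^ d) +
          ∑ j : Fin d, X j * C ((x i : ℤ) ^ (d - 1 - (j : ℕ)))) :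
            MvPolynomial (Fin d) ℤ) =
         ∏ i, (C ((y i : ℤ) ^ d) +
          ∑ j : Fin d, X j * C ((y i : ℤ) ^ (d - 1 - (j : ℕ))))) :
    ∃ σ : Equiv.Perm (Fin ν), y = x ∘ σ := by
  classical
  -- specialize Z_{d} ↦ T, other Z_j ↦ 0
  set e : Fin d := ⟨d - 1, by omega⟩ with he
  set f : Fin d → Polynomial ℤ := fun j => if j = e then Polynomial.X else 0 with hf
  have key : ∀ z : Fin ν → ℕ,
      (MvPolynomial.aeval f)
        (∏ i, (C ((z i : ℤ) ^ d) +
          ∑ j : Fin d, X j * C ((z i : ℤ) ^ (d - 1 - (j : ℕ)))) : MvPolynomial (Fin d) ℤ)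
      = ∏ i, (Polynomial.X - Polynomial.C (-((z i : ℤ) ^ d))) := by
    intro z
    rw [map_prod]
    refine Finset.prod_congr rfl fun i _ => ?_
    rw [map_add, map_sum, aeval_C]
    have : ∀ j : Fin d, (MvPolynomial.aeval f) (X j * C ((z i : ℤ) ^ (d - 1 - (j : ℕ))))
        = if j = e then Polynomial.X else 0 := by
      intro j
      rw [map_mul, aeval_X, aeval_C, hf]
      by_cases hj : j = e
      · subst hj
        simp [he]
      · simp [hj]
    rw [Finset.sum_congr rfl fun j _ => this j, Finset.sum_ite_eq' Finset.univ e
      (fun _ => (Polynomial.X : Polynomial ℤ))]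
    simp [Algebra.algebraMap_self_apply]
    ring
  have h1 : (∏ i, (Polynomial.X - Polynomial.C (-((x i : ℤ) ^ d))))
      = ∏ i, (Polynomial.X - Polynomial.C (-((y i : ℤ) ^ d))) := by
    rw [← key x, ← key y, h]
  -- take roots
  have hroots : ∀ z : Fin ν → ℕ,
      (∏ i, (Polynomial.X - Polynomial.C (-((z i : ℤ) ^ d)))).roots
      = Multiset.map (fun i => -((z i : ℤ) ^ d)) Finset.univ.val := by
    intro z
    rw [← Polynomial.roots_multiset_prod_X_sub_C
      (Multiset.map (fun i => -((z i : ℤ) ^ d)) Finset.univ.val)]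
    congr 1
    rw [Multiset.map_map, Finset.prod_eq_multiset_prod]
    rfl
  have h2 : Multiset.map (fun i => -((x i : ℤ) ^ d)) Finset.univ.val
      = Multiset.map (fun i => -((y i : ℤ) ^ d)) Finset.univ.val := by
    rw [← hroots x, ← hroots y, h1]
  have h3 : Multiset.map (fun n : ℕ => -((n : ℤ) ^ d)) (Multiset.map x Finset.univ.val)
      = Multiset.map (fun n : ℕ => -((n : ℤ) ^ d)) (Multiset.map y Finset.univ.val) := by
    rw [Multiset.map_map, Multiset.map_map]
    exact h2
  have hinj : Function.Injective (fun n : ℕ => -((n : ℤ) ^ d)) := by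
    intro a b hab
    simp only [neg_inj] at hab
    have : ((a ^ d : ℕ) : ℤ) = ((b ^ d : ℕ) : ℤ) := by push_cast; exact hab
    have := Nat.cast_injective (R := ℤ) this
    exact Nat.pow_left_injective (by omega) this
  have h4 : Multiset.map y Finset.univ.val = Multiset.map x Finset.univ.val :=
    (Multiset.map_injective hinj h3).symm
  exact exists_perm_of_map_univ_eq h4
end

section
/- Let p be a prime and f(X) = a₀X² + a₁X + a₂ ∈ F_p[X] with a₀ ≠ 0. Suppose x₁ < x₂ < ... < x_k are elements of F_p with f(x_i) ∈ G for a multiplicative subgroup G of F_p* of order T, and k ≥ 4. Then there exists λ ∈ G with λ ≠ 1 such that the congruence f(x) ≡ λ f(y) (mod p) holds for at least (k² - 2k)/T ≥ k²/(2T) pairs (x, y) with x, y ∈ {x₁, ..., x_k}. -/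
open Polynomial Finset

theorem stmt_7 (p : ℕ) [Fact p.Prime] (a₀ a₁ a₂ : ZMod p) (ha₀ : a₀ ≠ 0)
    (f : Polynomial (ZMod p))
    (hf : f = Polynomial.C a₀ * Polynomial.X ^ 2 + Polynomial.C a₁ * Polynomial.X
      + Polynomial.C a₂)
    (k : ℕ) (hk : 4 ≤ k) (x : Fin k → ZMod p) (hinj : Function.Injective x)
    (G : Subgroup (ZMod p)ˣ) (T : ℕ) (hT : Nat.card G = T)
    (hmem : ∀ i, ∃ g ∈ G, ((g : (ZMod p)ˣ) : ZMod p) = f.eval (x i)) :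
    ∃ lam : (ZMod p)ˣ, lam ∈ G ∧ (lam : ZMod p) ≠ 1 ∧
      k ^ 2 - 2 * k ≤ T * {q : Fin k × Fin k |
          f.eval (x q.1) = (lam : ZMod p) * f.eval (x q.2)}.ncard ∧
      k ^ 2 ≤ 2 * T * {q : Fin k × Fin k |
          f.eval (x q.1) = (lam : ZMod p) * f.eval (x q.2)}.ncard := by
  classical
  choose gu hguG hgu using hmem
  have hk4 : 4 * k ≤ k * k := Nat.mul_le_mul_right k hk
  -- each value of f is attained at most twice among the x i
  have hA : ∀ i : Fin k,
      (univ.filter (fun j => f.eval (x j) = f.eval (x i))).card ≤ 2 := by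
    intro i
    set g : Polynomial (ZMod p) :=
      C a₀ * X ^ 2 + C a₁ * X + C (a₂ - f.eval (x i)) with hg
    have hgne : g ≠ 0 := by
      intro h
      have : g.coeff 2 = a₀ := by
        simp [hg, coeff_add, coeff_C_mul, coeff_C, coeff_X]
      rw [h] at this
      exact ha₀ (by simpa using this.symm)
    have hdeg : g.natDegree ≤ 2 := Polynomial.natDegree_quadratic_le
    have hroot : ∀ j : Fin k, f.eval (x j) = f.eval (x i) → x j ∈ g.roots.toFinset := by
      intro j hj
      rw [Multiset.mem_toFinset, mem_roots hgne]
      have : g.eval (x j) = f.eval (x j) - f.eval (x i) := by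
        simp [hg, hf]; ring
      simp [IsRoot, this, hj]
    calc (univ.filter (fun j => f.eval (x j) = f.eval (x i))).card
        ≤ g.roots.toFinset.card := by
          apply Finset.card_le_card_of_injOn x
          · intro j hj
            exact hroot j (by simpa using hj)
          · exact fun a _ b _ h => hinj h
      _ ≤ Multiset.card g.roots := Multiset.toFinset_card_le _
      _ ≤ g.natDegree := Polynomial.card_roots' g
      _ ≤ 2 := hdeg
  set B : Finset (Fin k × Fin k) :=
    univ.filter (fun q => f.eval (x q.1) = f.eval (x q.2)) with hBdef
  have hB : B.card ≤ 2 * k := by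
    rw [Finset.card_eq_sum_card_fiberwise
      (f := Prod.fst) (t := univ) (fun q _ => mem_univ _)]
    calc ∑ i : Fin k, (B.filter fun q => q.1 = i).card
        ≤ ∑ _i : Fin k, 2 := by
          apply Finset.sum_le_sum
          intro i _
          have : (B.filter fun q => q.1 = i).card ≤
              (univ.filter (fun j => f.eval (x j) = f.eval (x i))).card := by
            apply Finset.card_le_card_of_injOn Prod.snd
            · intro q hq
              simp only [hBdef, Finset.mem_coe, mem_filter, mem_univ, true_and] at hq ⊢
              rw [← hq.1, hq.2]
            · intro a ha b hb h
              have ha' : a.1 = i := by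
                simp only [Finset.mem_coe, mem_filter] at ha; exact ha.2
              have hb' : b.1 = i := by
                simp only [Finset.mem_coe, mem_filter] at hb; exact hb.2
              exact Prod.ext (ha'.trans hb'.symm) h
          exact this.trans (hA i)
      _ = 2 * k := by simp [mul_comm]
  set Sg : Finset (Fin k × Fin k) := univ \ B with hSgdef
  have hcardU : (univ : Finset (Fin k × Fin k)).card = k * k := by simp
  have hSgcard : Sg.card = k * k - B.card := by
    rw [hSgdef, Finset.card_sdiff_of_subset (Finset.subset_univ B), hcardU]
  have hSg : k * k - 2 * k ≤ Sg.card := by omega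
  have hSgmem : ∀ q ∈ Sg, f.eval (x q.1) ≠ f.eval (x q.2) := by
    intro q hq
    simp only [hSgdef, Finset.mem_sdiff, hBdef, mem_filter, mem_univ, true_and] at hq
    exact hq
  have hSgne : Sg.Nonempty := by
    rw [← Finset.card_pos]; omega
  set r : Fin k × Fin k → (ZMod p)ˣ := fun q => gu q.1 * (gu q.2)⁻¹ with hrdef
  set t : Finset (ZMod p)ˣ := Sg.image r with htdef
  have htne : t.Nonempty := hSgne.image r
  have hmapsG : ∀ b ∈ t, b ∈ G ∧ b ≠ 1 := by
    intro b hb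
    rw [htdef, Finset.mem_image] at hb
    obtain ⟨q, hq, rfl⟩ := hb
    refine ⟨mul_mem (hguG q.1) (inv_mem (hguG q.2)), ?_⟩
    intro h1
    have hgg : gu q.1 = gu q.2 := by
      have := h1
      rw [hrdef] at this
      exact mul_inv_eq_one.mp this
    have : f.eval (x q.1) = f.eval (x q.2) := by
      rw [← hgu q.1, ← hgu q.2, hgg]
    exact hSgmem q hq this
  have htT : t.card ≤ T := by
    have hsub : t ⊆ (G : Set (ZMod p)ˣ).toFinset := by
      intro b hb
      exact Set.mem_toFinset.2 ((hmapsG b hb).1)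
    calc t.card ≤ (G : Set (ZMod p)ˣ).toFinset.card := Finset.card_le_card hsub
      _ = Fintype.card G := by rw [Set.toFinset_card]; rfl
      _ = Nat.card G := (Nat.card_eq_fintype_card).symm
      _ = T := hT
  -- pigeonhole
  have hsum : Sg.card = ∑ b ∈ t, (Sg.filter fun q => r q = b).card :=
    Finset.card_eq_sum_card_fiberwise (fun q hq => Finset.mem_image_of_mem r hq)
  obtain ⟨b, hbt, hbsup⟩ := Finset.exists_mem_eq_sup t htne
    (fun b => (Sg.filter fun q => r q = b).card)
  have hpig : Sg.card ≤ t.card * (Sg.filter fun q => r q = b).card := by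
    rw [hsum, ← hbsup]
    calc ∑ c ∈ t, (Sg.filter fun q => r q = c).card
        ≤ ∑ _c ∈ t, t.sup (fun c => (Sg.filter fun q => r q = c).card) :=
          Finset.sum_le_sum (fun c hc => Finset.le_sup (f := fun c => (Sg.filter fun q => r q = c).card) hc)
      _ = t.card * t.sup (fun c => (Sg.filter fun q => r q = c).card) := by
          rw [Finset.sum_const, smul_eq_mul]
  obtain ⟨hbG, hbne⟩ := hmapsG b hbt
  set Sset : Set (Fin k × Fin k) :=
    {q : Fin k × Fin k | f.eval (x q.1) = (b : ZMod p) * f.eval (x q.2)} with hSsetdef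
  have hfibsub : ∀ q ∈ (Sg.filter fun q => r q = b), q ∈ Sset := by
    intro q hq
    rw [Finset.mem_filter] at hq
    have hq2 := hq.2
    rw [hrdef] at hq2
    have : gu q.1 = b * gu q.2 := by
      rw [← hq2]; group
    rw [hSsetdef, Set.mem_setOf_eq, ← hgu q.1, ← hgu q.2, this]
    push_cast
    ring
  have hle : (Sg.filter fun q => r q = b).card ≤ Sset.ncard := by
    rw [← Set.ncard_coe_finset]
    exact Set.ncard_le_ncard (fun q hq => hfibsub q hq) (Set.toFinite _)
  have h1 : Sg.card ≤ T * Sset.ncard := hpig.trans (Nat.mul_le_mul htT hle)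
  have hksq : k ^ 2 = k * k := sq k
  have h2 : 2 * T * Sset.ncard = 2 * (T * Sset.ncard) := by ring
  refine ⟨b, hbG, ?_, ?_, ?_⟩
  · intro h
    exact hbne (Units.ext (by simpa using h))
  · show k ^ 2 - 2 * k ≤ T * Sset.ncard
    omega
  · show k ^ 2 ≤ 2 * T * Sset.ncard
    omega
end

section
/- Let p be a prime and F(X,Y) ∈ ℤ[X,Y] a quadratic polynomial, and let z be an integer. If F(X,Y) - zp is reducible over ℂ, then the reduction of F(X,Y) modulo p is reducible over the algebraic closure of F_p (or is zero or has degree less than 2 after reduction, under the assumption the leading form survives reduction). -/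
set_option linter.unusedSectionVars false

namespace Stmt8Aux

open MvPolynomial

variable {k : Type*} [Field k] [IsAlgClosed k]

lemma quad_roots (S P : k) : ∃ r₁ r₂ : k, r₁ + r₂ = S ∧ r₁ * r₂ = P := by
  obtain ⟨r, hr⟩ := IsAlgClosed.exists_root
    (Polynomial.X ^ 2 - Polynomial.C S * Polynomial.X + Polynomial.C P) (by
      have h2 : (Polynomial.X ^ 2 - Polynomial.C S * Polynomial.X + Polynomial.C P : Polynomial k).degree = 2 := by
        compute_degree!
      rw [h2]; exact (by norm_num : (2 : WithBot ℕ) ≠ 0))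
  have hr' : r ^ 2 - S * r + P = 0 := by simpa using hr
  exact ⟨r, S - r, by ring, by linear_combination -hr'⟩

lemma sqrt_pair {l q c : k} (h : l ^ 2 = q * c) :
    ∃ s t : k, s ^ 2 = q ∧ t ^ 2 = c ∧ s * t = l := by
  obtain ⟨s, hs⟩ := IsAlgClosed.exists_pow_nat_eq q (n := 2) (by norm_num)
  by_cases hs0 : s = 0
  · subst hs0
    obtain ⟨t, ht⟩ := IsAlgClosed.exists_pow_nat_eq c (n := 2) (by norm_num)
    have hq : q = 0 := by simpa using hs.symm
    have hl : l = 0 := by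
      have : l ^ 2 = 0 := by rw [h, hq, zero_mul]
      exact pow_eq_zero_iff (n := 2) (by norm_num) |>.mp this
    exact ⟨0, t, by simpa using hs, ht, by simp [hl]⟩
  · refine ⟨s, l / s, hs, ?_, by field_simp⟩
    field_simp
    linear_combination h - c * hs

def Fac (qa qb qc qd qe qk : k) : Prop :=
  ∃ a₁ b₁ c₁ a₂ b₂ c₂ : k,
    (a₁ ≠ 0 ∨ b₁ ≠ 0) ∧ (a₂ ≠ 0 ∨ b₂ ≠ 0) ∧
    a₁ * a₂ = qa ∧ a₁ * b₂ + b₁ * a₂ = qb ∧ b₁ * b₂ = qc ∧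
    a₁ * c₂ + c₁ * a₂ = qd ∧ b₁ * c₂ + c₁ * b₂ = qe ∧ c₁ * c₂ = qk

lemma fac_swap {qa qb qc qd qe qk : k} (h : Fac qc qb qa qe qd qk) :
    Fac qa qb qc qd qe qk := by
  obtain ⟨a₁, b₁, c₁, a₂, b₂, c₂, h1, h2, e1, e2, e3, e4, e5, e6⟩ := h
  exact ⟨b₁, a₁, c₁, b₂, a₂, c₂, h1.symm, h2.symm, e3, by linear_combination e2, e1,
    e5, e4, e6⟩

lemma fac_A {qa qb qc qd qe qk : k} (h2 : (2 : k) ≠ 0) (hA : qa ≠ 0)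
    (hΔ : 4*qa*qc*qk + qb*qd*qe - qa*qe^2 - qc*qd^2 - qk*qb^2 = 0) :
    Fac qa qb qc qd qe qk := by
  have key : (qb*qd - 2*qa*qe) ^ 2 = (qb^2 - 4*qa*qc) * (qd^2 - 4*qa*qk) := by
    linear_combination (-4*qa) * hΔ
  obtain ⟨s, t, hs, ht, hst⟩ := sqrt_pair key
  refine ⟨1, (qb+s)/(2*qa), (qd+t)/(2*qa), qa, (qb-s)/2, (qd-t)/2,
    Or.inl one_ne_zero, Or.inl hA, ?_, ?_, ?_, ?_, ?_, ?_⟩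
  · ring
  · field_simp; ring
  · rw [div_mul_div_comm]
    rw [div_eq_iff (by simp [hA, h2] : (2*qa)*2 ≠ 0)]
    linear_combination -hs
  · field_simp; ring
  · rw [div_mul_div_comm, div_mul_div_comm, ← add_div,
      div_eq_iff (by simp [hA, h2] : (2*qa)*2 ≠ 0)]
    linear_combination -2*hst
  · rw [div_mul_div_comm, div_eq_iff (by simp [hA, h2] : (2*qa)*2 ≠ 0)]
    linear_combination -ht

lemma fac_B0 {qb qd qe qk : k} (hB : qb ≠ 0)
    (hΔ : 4*(0:k)*0*qk + qb*qd*qe - 0*qe^2 - 0*qd^2 - qk*qb^2 = 0) :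
    Fac (0 : k) qb 0 qd qe qk := by
  obtain ⟨y₀, hy⟩ : ∃ y, qb * y = qd := ⟨qd/qb, by field_simp⟩
  refine ⟨qb, 0, qe, 0, 1, y₀, Or.inl hB, Or.inr one_ne_zero,
    by ring, by ring, by ring, by linear_combination hy, by ring, ?_⟩
  have h6 : qb^2 * (qe * y₀) = qb^2 * qk := by linear_combination qb*qe*hy + hΔ
  exact mul_left_cancel₀ (pow_ne_zero 2 hB) h6

lemma fac2_B {qa qb qc qd qe qk : k} (h2 : (2 : k) = 0) (hB : qb ≠ 0) (hA : qa ≠ 0)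
    (hΔ : 4*qa*qc*qk + qb*qd*qe - qa*qe^2 - qc*qd^2 - qk*qb^2 = 0) :
    Fac qa qb qc qd qe qk := by
  obtain ⟨r₁, r₂, hsum, hprod⟩ := quad_roots (qb/qa) (qc/qa)
  have hsum' : qa * (r₁ + r₂) = qb := by rw [hsum]; field_simp; try ring
  have hprod' : qa * (r₁ * r₂) = qc := by rw [hprod]; field_simp; try ring
  obtain ⟨x₀, hx⟩ : ∃ x, qb * x = qe := ⟨qe/qb, by field_simp⟩
  obtain ⟨y₀, hy⟩ : ∃ y, qb * y = qd := ⟨qd/qb, by field_simp⟩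
  refine ⟨qa, -qa*r₁, -qa*(x₀ - r₁*y₀), 1, -r₂, -(x₀ - r₂*y₀),
    Or.inl hA, Or.inl one_ne_zero, by ring, ?_, by linear_combination hprod', ?_, ?_, ?_⟩
  · linear_combination -hsum' - qb*h2
  · linear_combination y₀*hsum' + hy - qa*x₀*h2
  · linear_combination x₀*hsum' + hx - qa*r₁*r₂*y₀*h2
  · have h6 : qb^2 * (-qa*(x₀ - r₁*y₀) * -(x₀ - r₂*y₀)) = qb^2 * qk := by
      linear_combination (qa*(qb*x₀+qe) - qb^2*y₀)*hx + (qc*(qb*y₀+qd) - qb*qe)*hy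
        - qb^2*x₀*y₀*hsum' + qb^2*y₀^2*hprod' + (2*qa*qc*qk - qk*qb^2)*h2 - hΔ
    exact mul_left_cancel₀ (pow_ne_zero 2 hB) h6

lemma fac2_B' {qb qc qd qe qk : k} (h2 : (2 : k) = 0) (hB : qb ≠ 0)
    (hΔ : 4*(0:k)*qc*qk + qb*qd*qe - 0*qe^2 - qc*qd^2 - qk*qb^2 = 0) :
    Fac (0 : k) qb qc qd qe qk := by
  obtain ⟨y₀, hy⟩ : ∃ y, qb * y = qd := ⟨qd/qb, by field_simp⟩
  refine ⟨0, 1, -y₀, qb, qc, -(qe + qc*y₀),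
    Or.inr one_ne_zero, Or.inl hB, by ring, by ring, by ring, ?_, ?_, ?_⟩
  · linear_combination -hy - qd*h2
  · linear_combination (-(qe + qc*y₀))*h2
  · have h6 : qb^2 * (-y₀ * -(qe + qc*y₀)) = qb^2 * qk := by
      linear_combination hΔ + qc*qd^2*h2 + (qb*qe + qc*(qb*y₀+qd))*hy
    exact mul_left_cancel₀ (pow_ne_zero 2 hB) h6

lemma fac2_0 {qa qc qd qe qk : k} (h2 : (2 : k) = 0) (hA : qa ≠ 0)
    (hΔ : 4*qa*qc*qk + (0:k)*qd*qe - qa*qe^2 - qc*qd^2 - qk*(0:k)^2 = 0) :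
    Fac qa (0 : k) qc qd qe qk := by
  obtain ⟨s, hs⟩ := IsAlgClosed.exists_pow_nat_eq (qc/qa) (n := 2) (by norm_num)
  have hs' : qa * s^2 = qc := by rw [hs]; field_simp; try ring
  have hsq0 : qa * (qe + s*qd)^2 = 0 := by
    linear_combination qd^2*hs' - hΔ + (2*qa*qc*qk + qa*s*qd*qe)*h2
  have hE : qe = -(s*qd) := by
    have h0 : (qe + s*qd)^2 = 0 := (mul_eq_zero.mp hsq0).resolve_left hA
    have h1 := pow_eq_zero_iff (n := 2) (by norm_num) |>.mp h0
    linear_combination h1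
  obtain ⟨r₁, r₂, hsum, hprod⟩ := quad_roots (-(qd/qa)) (qk/qa)
  have hsum' : qa * (r₁ + r₂) = -qd := by rw [hsum]; field_simp; try ring
  have hprod' : qa * (r₁ * r₂) = qk := by rw [hprod]; field_simp; try ring
  refine ⟨qa, qa*s, -(qa*r₁), 1, s, -r₂, Or.inl hA, Or.inl one_ne_zero,
    by ring, by linear_combination qa*s*h2, by linear_combination hs',
    by linear_combination -hsum', ?_, by linear_combination hprod'⟩
  · rw [hE]; linear_combination -s*hsum' + s*qd*h2

lemma fac_main {qa qb qc qd qe qk : k}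
    (hΔ : 4*qa*qc*qk + qb*qd*qe - qa*qe^2 - qc*qd^2 - qk*qb^2 = 0)
    (hq : qa ≠ 0 ∨ qb ≠ 0 ∨ qc ≠ 0) : Fac qa qb qc qd qe qk := by
  by_cases h2 : (2 : k) = 0
  · by_cases hB : qb = 0
    · subst hB
      by_cases hA : qa = 0
      · subst hA
        rcases hq with h | h | h
        · exact absurd rfl h
        · exact absurd rfl h
        · exact fac_swap (fac2_0 h2 h (by linear_combination hΔ))
      · exact fac2_0 h2 hA (by linear_combination hΔ)
    · by_cases hA : qa = 0
      · subst hA; exact fac2_B' h2 hB hΔ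
      · exact fac2_B h2 hB hA hΔ
  · by_cases hA : qa = 0
    · subst hA
      by_cases hC : qc = 0
      · subst hC
        rcases hq with h | h | h
        · exact absurd rfl h
        · exact fac_B0 h hΔ
        · exact absurd rfl h
      · exact fac_swap (fac_A h2 hC (by linear_combination hΔ))
    · exact fac_A h2 hA hΔ

end Stmt8Aux

namespace Stmt8AuxP

open MvPolynomial

variable {R : Type*} [CommRing R]

/-- The monomial exponent `X^i Y^j` as a `Fin 2 →₀ ℕ`. -/
noncomputable def mon (i j : ℕ) : Fin 2 →₀ ℕ := Finsupp.single 0 i + Finsupp.single 1 j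

@[simp] lemma mon_apply0 (i j : ℕ) : mon i j 0 = i := by
  simp [mon, Finsupp.single_apply, Fin.ext_iff]

@[simp] lemma mon_apply1 (i j : ℕ) : mon i j 1 = j := by
  simp [mon, Finsupp.single_apply, Fin.ext_iff]

lemma sum_eq (m : Fin 2 →₀ ℕ) : (m.sum fun _ e => e) = m 0 + m 1 := by
  rw [Finsupp.sum_fintype _ _ (fun _ => rfl)]
  simp [Fin.sum_univ_two]

lemma mon_eq_iff {i j i' j' : ℕ} : mon i j = mon i' j' ↔ i = i' ∧ j = j' := by
  constructor
  · intro h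
    refine ⟨?_, ?_⟩
    · have := congrArg (fun f => f 0) h; simpa using this
    · have := congrArg (fun f => f 1) h; simpa using this
  · rintro ⟨rfl, rfl⟩; rfl

lemma eq_mon (m : Fin 2 →₀ ℕ) : m = mon (m 0) (m 1) := by
  ext i
  fin_cases i <;> simp

lemma CXX_eq (a : R) (i j : ℕ) :
    (C a : MvPolynomial (Fin 2) R) * X 0 ^ i * X 1 ^ j = monomial (mon i j) a := by
  rw [X_pow_eq_monomial, X_pow_eq_monomial, C_apply, monomial_mul, monomial_mul]
  simp [mon, add_assoc]

lemma coeff_CXX (m : Fin 2 →₀ ℕ) (a : R) (i j : ℕ) :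
    coeff m ((C a : MvPolynomial (Fin 2) R) * X 0 ^ i * X 1 ^ j)
      = if mon i j = m then a else 0 := by
  rw [CXX_eq, coeff_monomial]

/-- The general quadratic polynomial in two variables. -/
noncomputable def quadPoly (a b c d e f : R) : MvPolynomial (Fin 2) R :=
  C a * X 0 ^ 2 * X 1 ^ 0 + C b * X 0 ^ 1 * X 1 ^ 1 + C c * X 0 ^ 0 * X 1 ^ 2 +
  C d * X 0 ^ 1 * X 1 ^ 0 + C e * X 0 ^ 0 * X 1 ^ 1 + C f * X 0 ^ 0 * X 1 ^ 0

@[simp] lemma coeff_quad_20 (a b c d e f : R) :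
    coeff (mon 2 0) (quadPoly a b c d e f) = a := by
  unfold quadPoly
  simp only [coeff_add, coeff_CXX]
  norm_num [mon_eq_iff]

@[simp] lemma coeff_quad_11 (a b c d e f : R) :
    coeff (mon 1 1) (quadPoly a b c d e f) = b := by
  unfold quadPoly
  simp only [coeff_add, coeff_CXX]
  norm_num [mon_eq_iff]

@[simp] lemma coeff_quad_02 (a b c d e f : R) :
    coeff (mon 0 2) (quadPoly a b c d e f) = c := by
  unfold quadPoly
  simp only [coeff_add, coeff_CXX]
  norm_num [mon_eq_iff]

@[simp] lemma coeff_quad_10 (a b c d e f : R) :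
    coeff (mon 1 0) (quadPoly a b c d e f) = d := by
  unfold quadPoly
  simp only [coeff_add, coeff_CXX]
  norm_num [mon_eq_iff]

@[simp] lemma coeff_quad_01 (a b c d e f : R) :
    coeff (mon 0 1) (quadPoly a b c d e f) = e := by
  unfold quadPoly
  simp only [coeff_add, coeff_CXX]
  norm_num [mon_eq_iff]

@[simp] lemma coeff_quad_00 (a b c d e f : R) :
    coeff (mon 0 0) (quadPoly a b c d e f) = f := by
  unfold quadPoly
  simp only [coeff_add, coeff_CXX]
  norm_num [mon_eq_iff]

@[simp] lemma coeff_quad_12 (a b c d e f : R) :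
    coeff (mon 1 2) (quadPoly a b c d e f) = 0 := by
  unfold quadPoly
  simp only [coeff_add, coeff_CXX]
  norm_num [mon_eq_iff]

@[simp] lemma coeff_quad_21 (a b c d e f : R) :
    coeff (mon 2 1) (quadPoly a b c d e f) = 0 := by
  unfold quadPoly
  simp only [coeff_add, coeff_CXX]
  norm_num [mon_eq_iff]

@[simp] lemma coeff_quad_22 (a b c d e f : R) :
    coeff (mon 2 2) (quadPoly a b c d e f) = 0 := by
  unfold quadPoly
  simp only [coeff_add, coeff_CXX]
  norm_num [mon_eq_iff]

lemma coeff_zero_of_td {P : MvPolynomial (Fin 2) R} {m : Fin 2 →₀ ℕ}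
    (h : P.totalDegree < m 0 + m 1) : coeff m P = 0 := by
  by_contra hne
  have := le_totalDegree (mem_support_iff.mpr hne)
  rw [sum_eq] at this
  omega

lemma td_CXX_le (a : R) (i j : ℕ) :
    ((C a : MvPolynomial (Fin 2) R) * X 0 ^ i * X 1 ^ j).totalDegree ≤ i + j := by
  rw [CXX_eq]
  refine (totalDegree_monomial_le _ _).trans (le_of_eq ?_)
  rw [Finsupp.sum_fintype _ _ (fun _ => rfl)]
  simp [Fin.sum_univ_two]

lemma td_quad_le (a b c d e f : R) : (quadPoly a b c d e f).totalDegree ≤ 2 := by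
  unfold quadPoly
  refine (totalDegree_add _ _).trans (max_le ((totalDegree_add _ _).trans (max_le
    ((totalDegree_add _ _).trans (max_le ((totalDegree_add _ _).trans (max_le
    ((totalDegree_add _ _).trans (max_le ((td_CXX_le _ _ _).trans (by norm_num))
      ((td_CXX_le _ _ _).trans (by norm_num)))) ((td_CXX_le _ _ _).trans (by norm_num))))
      ((td_CXX_le _ _ _).trans (by norm_num)))) ((td_CXX_le _ _ _).trans (by norm_num))))
      ((td_CXX_le _ _ _).trans (by norm_num)))

lemma repr_quad {P : MvPolynomial (Fin 2) R} (h : P.totalDegree ≤ 2) :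
    P = quadPoly (coeff (mon 2 0) P) (coeff (mon 1 1) P) (coeff (mon 0 2) P)
      (coeff (mon 1 0) P) (coeff (mon 0 1) P) (coeff (mon 0 0) P) := by
  apply MvPolynomial.ext
  intro m
  by_cases hm : m 0 + m 1 ≤ 2
  · have h0 : m 0 ≤ 2 := by omega
    have h1 : m 1 ≤ 2 := by omega
    rw [eq_mon m]
    interval_cases hi : (m 0) <;> interval_cases hj : (m 1) <;>
      first
        | (exfalso; omega)
        | simp
  · rw [coeff_zero_of_td (by omega), coeff_zero_of_td ?_]
    · have hq := td_quad_le (R := R) (coeff (mon 2 0) P) (coeff (mon 1 1) P)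
        (coeff (mon 0 2) P) (coeff (mon 1 0) P) (coeff (mon 0 1) P) (coeff (mon 0 0) P)
      omega

lemma quadPoly_inj {a b c d e f a' b' c' d' e' f' : R}
    (h : quadPoly a b c d e f = quadPoly a' b' c' d' e' f') :
    a = a' ∧ b = b' ∧ c = c' ∧ d = d' ∧ e = e' ∧ f = f' := by
  refine ⟨?_, ?_, ?_, ?_, ?_, ?_⟩
  · have := congrArg (coeff (mon 2 0)) h; simpa using this
  · have := congrArg (coeff (mon 1 1)) h; simpa using this
  · have := congrArg (coeff (mon 0 2)) h; simpa using this
  · have := congrArg (coeff (mon 1 0)) h; simpa using this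
  · have := congrArg (coeff (mon 0 1)) h; simpa using this
  · have := congrArg (coeff (mon 0 0)) h; simpa using this

lemma map_quadPoly {S : Type*} [CommRing S] (φ : R →+* S) (a b c d e f : R) :
    MvPolynomial.map φ (quadPoly a b c d e f)
      = quadPoly (φ a) (φ b) (φ c) (φ d) (φ e) (φ f) := by
  simp [quadPoly, map_add, map_mul, map_pow, MvPolynomial.map_C, MvPolynomial.map_X]

lemma td_lin_le (d e f : R) : (quadPoly 0 0 0 d e f).totalDegree ≤ 1 := by
  have : quadPoly 0 0 0 d e f
      = C d * X 0 ^ 1 * X 1 ^ 0 + C e * X 0 ^ 0 * X 1 ^ 1 + C f * X 0 ^ 0 * X 1 ^ 0 := by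
    unfold quadPoly
    simp only [map_zero, zero_mul, zero_add]
  rw [this]
  refine (totalDegree_add _ _).trans (max_le ((totalDegree_add _ _).trans (max_le
    ((td_CXX_le _ _ _).trans (by norm_num)) ((td_CXX_le _ _ _).trans (by norm_num))))
    ((td_CXX_le _ _ _).trans (by norm_num)))

lemma one_le_td_lin {d e f : R} (h : d ≠ 0 ∨ e ≠ 0) :
    1 ≤ (quadPoly 0 0 0 d e f).totalDegree := by
  rcases h with h | h
  · have hc : coeff (mon 1 0) (quadPoly 0 0 0 d e f) ≠ 0 := by
      simpa using h
    have := le_totalDegree (mem_support_iff.mpr hc)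
    rw [sum_eq] at this; simpa using this
  · have hc : coeff (mon 0 1) (quadPoly 0 0 0 d e f) ≠ 0 := by
      simpa using h
    have := le_totalDegree (mem_support_iff.mpr hc)
    rw [sum_eq] at this; simpa using this

lemma lin_mul_lin (a₁ b₁ c₁ a₂ b₂ c₂ : R) :
    quadPoly 0 0 0 a₁ b₁ c₁ * quadPoly 0 0 0 a₂ b₂ c₂
      = quadPoly (a₁*a₂) (a₁*b₂ + b₁*a₂) (b₁*b₂) (a₁*c₂ + c₁*a₂) (b₁*c₂ + c₁*b₂) (c₁*c₂) := by
  unfold quadPoly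
  simp only [map_zero, map_add, map_mul, zero_mul, zero_add]
  ring

set_option maxHeartbeats 1000000 in
/-- total degree of a product in a domain (two variables). -/
lemma td_mul_eq {K : Type*} [CommRing K] [IsDomain K] {f g : MvPolynomial (Fin 2) K}
    (hf : f ≠ 0) (hg : g ≠ 0) :
    (f * g).totalDegree = f.totalDegree + g.totalDegree := by
  refine le_antisymm (totalDegree_mul f g) ?_
  obtain ⟨m₁, hm₁s, hmax₁⟩ := Finset.exists_max_image f.support
    (fun m => toLex (m 0 + m 1, m 0)) (support_nonempty.mpr hf)
  obtain ⟨m₂, hm₂s, hmax₂⟩ := Finset.exists_max_image g.support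
    (fun m => toLex (m 0 + m 1, m 0)) (support_nonempty.mpr hg)
  have deg₁ : ∀ m ∈ f.support, m 0 + m 1 ≤ m₁ 0 + m₁ 1 := by
    intro m hm
    have := hmax₁ m hm
    rw [Prod.Lex.le_iff] at this
    rcases this with h | ⟨h, _⟩ <;> simp_all <;> omega
  have deg₂ : ∀ m ∈ g.support, m 0 + m 1 ≤ m₂ 0 + m₂ 1 := by
    intro m hm
    have := hmax₂ m hm
    rw [Prod.Lex.le_iff] at this
    rcases this with h | ⟨h, _⟩ <;> simp_all <;> omega
  have htd₁ : f.totalDegree = m₁ 0 + m₁ 1 := by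
    refine le_antisymm ?_ ?_
    · rw [totalDegree]
      apply Finset.sup_le
      intro m hm; rw [sum_eq]; exact deg₁ m hm
    · have := le_totalDegree hm₁s; rwa [sum_eq] at this
  have htd₂ : g.totalDegree = m₂ 0 + m₂ 1 := by
    refine le_antisymm ?_ ?_
    · rw [totalDegree]
      apply Finset.sup_le
      intro m hm; rw [sum_eq]; exact deg₂ m hm
    · have := le_totalDegree hm₂s; rwa [sum_eq] at this
  have hco : coeff (m₁ + m₂) (f * g) = coeff m₁ f * coeff m₂ g := by
    rw [coeff_mul]
    apply Finset.sum_eq_single (m₁, m₂)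
    · rintro ⟨a, b⟩ hab hne
      rw [Finset.HasAntidiagonal.mem_antidiagonal] at hab
      by_cases ca : coeff a f = 0
      · simp [ca]
      by_cases cb : coeff b g = 0
      · simp [cb]
      exfalso
      have haf : a ∈ f.support := mem_support_iff.mpr ca
      have hbg : b ∈ g.support := mem_support_iff.mpr cb
      have l1 := hmax₁ a haf
      have l2 := hmax₂ b hbg
      rw [Prod.Lex.le_iff] at l1 l2
      have e0 : a 0 + b 0 = m₁ 0 + m₂ 0 := by
        have := congrArg (fun f => f 0) hab; simpa using this
      have e1 : a 1 + b 1 = m₁ 1 + m₂ 1 := by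
        have := congrArg (fun f => f 1) hab; simpa using this
      have ha0 : a 0 = m₁ 0 ∧ a 1 = m₁ 1 ∧ b 0 = m₂ 0 ∧ b 1 = m₂ 1 := by
        simp only [Prod.mk_lt_mk, Prod.mk.injEq, ofLex_toLex] at l1 l2
        omega
      apply hne
      have ha : a = m₁ := by
        rw [eq_mon a, eq_mon m₁, ha0.1, ha0.2.1]
      have hb : b = m₂ := by
        rw [eq_mon b, eq_mon m₂, ha0.2.2.1, ha0.2.2.2]
      rw [ha, hb]
    · intro h
      exact absurd (by rw [Finset.HasAntidiagonal.mem_antidiagonal]) h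
  have hmem : (m₁ + m₂) ∈ (f * g).support := by
    rw [mem_support_iff, hco]
    exact mul_ne_zero (mem_support_iff.mp hm₁s) (mem_support_iff.mp hm₂s)
  have := le_totalDegree hmem
  rw [sum_eq] at this
  simp only [Finsupp.add_apply] at this
  omega

lemma quadPoly_sub_C (a b c d e f g : R) :
    quadPoly a b c d e f - C g = quadPoly a b c d e (f - g) := by
  unfold quadPoly
  rw [map_sub]
  ring

lemma two_le_td_quad {a b c d e f : R} (h : a ≠ 0 ∨ b ≠ 0 ∨ c ≠ 0) :
    2 ≤ (quadPoly a b c d e f).totalDegree := by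
  rcases h with h | h | h
  · have hc : coeff (mon 2 0) (quadPoly a b c d e f) ≠ 0 := by simpa using h
    have := le_totalDegree (mem_support_iff.mpr hc)
    rw [sum_eq] at this; simpa using this
  · have hc : coeff (mon 1 1) (quadPoly a b c d e f) ≠ 0 := by simpa using h
    have := le_totalDegree (mem_support_iff.mpr hc)
    rw [sum_eq] at this; simpa using this
  · have hc : coeff (mon 0 2) (quadPoly a b c d e f) ≠ 0 := by simpa using h
    have := le_totalDegree (mem_support_iff.mpr hc)
    rw [sum_eq] at this; simpa using this

lemma repr_lin {P : MvPolynomial (Fin 2) R} (h : P.totalDegree ≤ 1) :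
    P = quadPoly 0 0 0 (coeff (mon 1 0) P) (coeff (mon 0 1) P) (coeff (mon 0 0) P) := by
  have h2 : P.totalDegree ≤ 2 := h.trans one_le_two
  have e1 : coeff (mon 2 0) P = 0 := coeff_zero_of_td (by simp; omega)
  have e2 : coeff (mon 1 1) P = 0 := coeff_zero_of_td (by simp; omega)
  have e3 : coeff (mon 0 2) P = 0 := coeff_zero_of_td (by simp; omega)
  conv_lhs => rw [repr_quad h2]
  rw [e1, e2, e3]

end Stmt8AuxP
open Stmt8Aux Stmt8AuxP

open MvPolynomial in
theorem stmt_8 (p : ℕ) [Fact p.Prime] (F : MvPolynomial (Fin 2) ℤ)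
    (hdeg : F.totalDegree = 2) (z : ℤ)
    (hred : ∃ G₁ G₂ : MvPolynomial (Fin 2) ℂ,
      MvPolynomial.map (Int.castRingHom ℂ) F - C ((z * p : ℤ) : ℂ) = G₁ * G₂ ∧
      1 ≤ G₁.totalDegree ∧ 1 ≤ G₂.totalDegree) :
    MvPolynomial.map (Int.castRingHom (AlgebraicClosure (ZMod p))) F = 0 ∨
    (MvPolynomial.map (Int.castRingHom (AlgebraicClosure (ZMod p))) F).totalDegree < 2 ∨
    ∃ G₁ G₂ : MvPolynomial (Fin 2) (AlgebraicClosure (ZMod p)),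
      MvPolynomial.map (Int.castRingHom (AlgebraicClosure (ZMod p))) F = G₁ * G₂ ∧
      1 ≤ G₁.totalDegree ∧ 1 ≤ G₂.totalDegree := by
  classical
  by_cases h0 : MvPolynomial.map (Int.castRingHom (AlgebraicClosure (ZMod p))) F = 0
  · exact Or.inl h0
  by_cases hlt : (MvPolynomial.map (Int.castRingHom (AlgebraicClosure (ZMod p))) F).totalDegree < 2
  · exact Or.inr (Or.inl hlt)
  refine Or.inr (Or.inr ?_)
  set cA := coeff (mon 2 0) F with hcA
  set cB := coeff (mon 1 1) F with hcB
  set cC := coeff (mon 0 2) F with hcC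
  set cD := coeff (mon 1 0) F with hcD
  set cE := coeff (mon 0 1) F with hcE
  set cK := coeff (mon 0 0) F with hcK
  have hFrepr : F = quadPoly cA cB cC cD cE cK := repr_quad hdeg.le
  -- not all quadratic coefficients vanish (over ℤ)
  have hqZ : cA ≠ 0 ∨ cB ≠ 0 ∨ cC ≠ 0 := by
    by_contra hq
    push_neg at hq
    obtain ⟨h1, h2, h3⟩ := hq
    rw [h1, h2, h3] at hFrepr
    have := td_lin_le cD cE cK
    rw [← hFrepr, hdeg] at this
    omega
  -- complex side
  obtain ⟨G₁, G₂, hmul, hd1, hd2⟩ := hred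
  have hmapF : MvPolynomial.map (Int.castRingHom ℂ) F
      = quadPoly (cA : ℂ) (cB : ℂ) (cC : ℂ) (cD : ℂ) (cE : ℂ) (cK : ℂ) := by
    have h := congrArg (MvPolynomial.map (Int.castRingHom ℂ)) hFrepr
    rw [map_quadPoly] at h
    simpa using h
  have hsub : MvPolynomial.map (Int.castRingHom ℂ) F - C ((z * p : ℤ) : ℂ)
      = quadPoly (cA : ℂ) (cB : ℂ) (cC : ℂ) (cD : ℂ) (cE : ℂ) ((cK : ℂ) - ((z * p : ℤ) : ℂ)) := by
    rw [hmapF, quadPoly_sub_C]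
  have hqC : (cA : ℂ) ≠ 0 ∨ (cB : ℂ) ≠ 0 ∨ (cC : ℂ) ≠ 0 := by
    rcases hqZ with h | h | h
    · exact Or.inl (by exact_mod_cast h)
    · exact Or.inr (Or.inl (by exact_mod_cast h))
    · exact Or.inr (Or.inr (by exact_mod_cast h))
  have hPdeg : (MvPolynomial.map (Int.castRingHom ℂ) F - C ((z * p : ℤ) : ℂ)).totalDegree = 2 := by
    rw [hsub]
    exact le_antisymm (td_quad_le _ _ _ _ _ _) (two_le_td_quad hqC)
  have hG1ne : G₁ ≠ 0 := by
    rintro rfl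
    simp at hd1
  have hG2ne : G₂ ≠ 0 := by
    rintro rfl
    simp at hd2
  have hdeq : G₁.totalDegree + G₂.totalDegree = 2 := by
    rw [← td_mul_eq hG1ne hG2ne, ← hmul, hPdeg]
  have hG1d : G₁.totalDegree ≤ 1 := by omega
  have hG2d : G₂.totalDegree ≤ 1 := by omega
  obtain ⟨a₁, b₁, c₁, hG1⟩ : ∃ a b c, G₁ = quadPoly 0 0 0 a b c := ⟨_, _, _, repr_lin hG1d⟩
  obtain ⟨a₂, b₂, c₂, hG2⟩ : ∃ a b c, G₂ = quadPoly 0 0 0 a b c := ⟨_, _, _, repr_lin hG2d⟩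
  have hkey : quadPoly (cA : ℂ) (cB : ℂ) (cC : ℂ) (cD : ℂ) (cE : ℂ) ((cK : ℂ) - ((z * p : ℤ) : ℂ))
      = quadPoly (a₁*a₂) (a₁*b₂ + b₁*a₂) (b₁*b₂) (a₁*c₂ + c₁*a₂) (b₁*c₂ + c₁*b₂) (c₁*c₂) := by
    rw [← hsub, hmul, hG1, hG2, lin_mul_lin]
  obtain ⟨e1, e2, e3, e4, e5, e6⟩ := quadPoly_inj hkey
  have hΔZ : (4*cA*cC*(cK - z*(p:ℤ)) + cB*cD*cE - cA*cE^2 - cC*cD^2 - (cK - z*(p:ℤ))*cB^2 : ℤ) = 0 := by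
    have hc : ((4*cA*cC*(cK - z*(p:ℤ)) + cB*cD*cE - cA*cE^2 - cC*cD^2 - (cK - z*(p:ℤ))*cB^2 : ℤ) : ℂ) = 0 := by
      push_cast
      push_cast at e1 e2 e3 e4 e5 e6
      linear_combination (4*(cC:ℂ)*((cK:ℂ) - (z:ℂ)*(p:ℂ)) - (cE:ℂ)^2) * e1
        + ((cD:ℂ)*(cE:ℂ) - ((cK:ℂ) - (z:ℂ)*(p:ℂ))*((cB:ℂ) + (a₁*b₂ + b₁*a₂))) * e2
        + (4*(a₁*a₂)*((cK:ℂ) - (z:ℂ)*(p:ℂ)) - (cD:ℂ)^2) * e3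
        + ((a₁*b₂ + b₁*a₂)*(cE:ℂ) - (b₁*b₂)*((cD:ℂ) + (a₁*c₂ + c₁*a₂))) * e4
        + ((a₁*b₂ + b₁*a₂)*(a₁*c₂ + c₁*a₂) - (a₁*a₂)*((cE:ℂ) + (b₁*c₂ + c₁*b₂))) * e5
        + (4*(a₁*a₂)*(b₁*b₂) - (a₁*b₂ + b₁*a₂)^2) * e6
    exact_mod_cast hc
  -- reduction mod p
  have hp0 : ((p : ℕ) : AlgebraicClosure (ZMod p)) = 0 := CharP.cast_eq_zero _ p
  have hΔk : 4*(cA : AlgebraicClosure (ZMod p))*(cC : AlgebraicClosure (ZMod p))*(cK : AlgebraicClosure (ZMod p))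
      + (cB : AlgebraicClosure (ZMod p))*(cD : AlgebraicClosure (ZMod p))*(cE : AlgebraicClosure (ZMod p))
      - (cA : AlgebraicClosure (ZMod p))*(cE : AlgebraicClosure (ZMod p))^2
      - (cC : AlgebraicClosure (ZMod p))*(cD : AlgebraicClosure (ZMod p))^2
      - (cK : AlgebraicClosure (ZMod p))*(cB : AlgebraicClosure (ZMod p))^2 = 0 := by
    have h := congrArg (fun t : ℤ => (t : AlgebraicClosure (ZMod p))) hΔZ
    push_cast at h
    linear_combination h + ((4*(cA : AlgebraicClosure (ZMod p))*(cC : AlgebraicClosure (ZMod p))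
      - (cB : AlgebraicClosure (ZMod p))^2) * (z : AlgebraicClosure (ZMod p))) * hp0
  have hPk : MvPolynomial.map (Int.castRingHom (AlgebraicClosure (ZMod p))) F
      = quadPoly (cA : AlgebraicClosure (ZMod p)) (cB : AlgebraicClosure (ZMod p))
        (cC : AlgebraicClosure (ZMod p)) (cD : AlgebraicClosure (ZMod p))
        (cE : AlgebraicClosure (ZMod p)) (cK : AlgebraicClosure (ZMod p)) := by
    have h := congrArg (MvPolynomial.map (Int.castRingHom (AlgebraicClosure (ZMod p)))) hFrepr
    rw [map_quadPoly] at h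
    simpa using h
  have hqk : (cA : AlgebraicClosure (ZMod p)) ≠ 0 ∨ (cB : AlgebraicClosure (ZMod p)) ≠ 0 ∨
      (cC : AlgebraicClosure (ZMod p)) ≠ 0 := by
    by_contra hq
    push_neg at hq
    obtain ⟨h1, h2, h3⟩ := hq
    rw [h1, h2, h3] at hPk
    have := td_lin_le (cD : AlgebraicClosure (ZMod p)) (cE : AlgebraicClosure (ZMod p))
      (cK : AlgebraicClosure (ZMod p))
    rw [← hPk] at this
    omega
  obtain ⟨a₁', b₁', c₁', a₂', b₂', c₂', hn1, hn2, f1, f2, f3, f4, f5, f6⟩ := fac_main hΔk hqk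
  refine ⟨quadPoly 0 0 0 a₁' b₁' c₁', quadPoly 0 0 0 a₂' b₂' c₂', ?_,
    one_le_td_lin hn1, one_le_td_lin hn2⟩
  rw [hPk, lin_mul_lin, f1, f2, f3, f4, f5, f6]
end

section
/- Let K be a number field of degree k over ℚ. There is a constant C depending only on k such that for any nonzero algebraic integer γ ∈ O_K of logarithmic height at most H ≥ 2, the number of ordered pairs (γ₁, γ₂) of algebraic integers in O_K, each of logarithmic height at most H, with γ = γ₁γ₂, is at most exp(C·H/log H). -/
/-- The logarithmic height (house) of an element of a number field:
the maximum over all complex embeddings of the logarithm of the absolute value. -/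
noncomputable def logHeight (K : Type*) [Field K] [NumberField K] (γ : K) : ℝ :=
  ⨆ σ : K →+* ℂ, Real.log ‖σ γ‖

open NumberField Polynomial Module UniqueFactorizationMonoid


theorem fiber_count {α β : Type*} (s : Set α) (f : α → β) (T : Finset β) (M : ℕ)
    (hmap : ∀ x ∈ s, f x ∈ T)
    (hfib : ∀ b ∈ T, {x | x ∈ s ∧ f x = b}.Finite ∧ {x | x ∈ s ∧ f x = b}.ncard ≤ M) :
    s.Finite ∧ s.ncard ≤ T.card * M := by
  classical
  have hsub : s ⊆ ⋃ b ∈ T, {x | x ∈ s ∧ f x = b} := fun x hx => by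
    simp only [Set.mem_iUnion]; exact ⟨f x, hmap x hx, hx, rfl⟩
  have hfin : s.Finite :=
    (Set.Finite.biUnion T.finite_toSet fun b hb => (hfib b hb).1).subset hsub
  refine ⟨hfin, ?_⟩
  rw [Set.ncard_eq_toFinset_card s hfin, mul_comm]
  refine Finset.card_le_mul_card_image_of_maps_to (f := f) (fun a ha => ?_) M (fun b hb => ?_)
  · exact hmap a (hfin.mem_toFinset.mp ha)
  · have hcoe : ((hfin.toFinset.filter fun a => f a = b) : Set α) = {x | x ∈ s ∧ f x = b} := by
      ext x; simp [Set.Finite.mem_toFinset]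
    have := (hfib b hb).2
    rwa [← hcoe, Set.ncard_coe_finset] at this


noncomputable def CkZ (k : ℕ) : ℤ :=
  (Nat.ceil (max (Real.exp 1) 1 ^ k * (k.choose (k/2))) : ℤ)

noncomputable def Wb (k : ℕ) : ℕ :=
  ((2 * Nat.ceil (max (Real.exp 1) 1 ^ k * (k.choose (k/2))) + 1)) ^ (k+1) * k

theorem wset_card (k : ℕ) (K : Type) [Field K] [NumberField K]
    (hrank : finrank ℚ K = k) :
    {x : K | IsIntegral ℤ x ∧ ∀ φ : K →+* ℂ, ‖φ x‖ ≤ Real.exp 1}.Finite ∧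
    {x : K | IsIntegral ℤ x ∧ ∀ φ : K →+* ℂ, ‖φ x‖ ≤ Real.exp 1}.ncard ≤ Wb k := by
  classical
  set W : Set K := {x : K | IsIntegral ℤ x ∧ ∀ φ : K →+* ℂ, ‖φ x‖ ≤ Real.exp 1} with hW
  set pol : (Fin (k+1) → ℤ) → ℤ[X] := fun c => ∑ i : Fin (k+1), Polynomial.C (c i) * X^(i:ℕ)
    with hpol
  set T : Finset ℤ[X] :=
    Finset.image pol (Fintype.piFinset fun _ : Fin (k+1) => Finset.Icc (-(CkZ k)) (CkZ k)) with hT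
  have hTcard : T.card ≤ (2 * Nat.ceil (max (Real.exp 1) 1 ^ k * (k.choose (k/2))) + 1) ^ (k+1) := by
    refine Finset.card_image_le.trans ?_
    rw [Fintype.card_piFinset]
    simp only [Int.card_Icc, Finset.prod_const, Finset.card_univ, Fintype.card_fin]
    apply Nat.pow_le_pow_left
    rw [CkZ]; omega
  have key := fiber_count W (fun x => minpoly ℤ x) T k ?_ ?_
  · refine ⟨key.1, key.2.trans ?_⟩
    rw [Wb]; exact Nat.mul_le_mul_right k hTcard
  · -- hmap
    intro x hx
    obtain ⟨hxi, hxb⟩ := hx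
    have h_map := minpoly.isIntegrallyClosed_eq_field_fractions' ℚ hxi
    have hdeg : (minpoly ℤ x).natDegree ≤ k := by
      rw [← (minpoly.monic hxi).natDegree_map (algebraMap ℤ ℚ), ← h_map, ← hrank]
      exact minpoly.natDegree_le x
    have hcoeff : ∀ i, (minpoly ℤ x).coeff i ∈ Finset.Icc (-(CkZ k)) (CkZ k) := by
      intro i
      rw [Finset.mem_Icc, ← abs_le, ← @Int.cast_le ℝ]
      have hbdd := NumberField.Embeddings.coeff_bdd_of_norm_le (A := ℂ) (x := x) (B := Real.exp 1)
        (fun φ => hxb φ) i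
      rw [hrank] at hbdd
      refine le_trans (Eq.trans_le ?_ hbdd) ?_
      · rw [h_map, coeff_map, eq_intCast, Int.norm_cast_rat, Int.norm_eq_abs, Int.cast_abs]
      · rw [CkZ]; push_cast; exact Nat.le_ceil _
    rw [hT, Finset.mem_image]
    refine ⟨fun i => (minpoly ℤ x).coeff i, by
      rw [Fintype.mem_piFinset]; exact fun i => hcoeff i, ?_⟩
    show (∑ i : Fin (k+1), Polynomial.C ((minpoly ℤ x).coeff i) * X^(i:ℕ)) = minpoly ℤ x
    rw [Fin.sum_univ_eq_sum_range (fun i => Polynomial.C ((minpoly ℤ x).coeff i) * X ^ i)]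
    simp_rw [Polynomial.C_mul_X_pow_eq_monomial]
    exact ((minpoly ℤ x).as_sum_range' (k+1) (Nat.lt_succ_of_le hdeg)).symm
  · -- fibers
    intro b hb
    show {x | x ∈ W ∧ minpoly ℤ x = b}.Finite ∧ {x | x ∈ W ∧ minpoly ℤ x = b}.ncard ≤ k
    have hsub : {x | x ∈ W ∧ minpoly ℤ x = b} ⊆ ((b.map (algebraMap ℤ K)).roots.toFinset : Set K) := by
      rintro x ⟨hxW, rfl⟩
      rw [Finset.mem_coe, Multiset.mem_toFinset, mem_roots']
      refine ⟨((minpoly.monic hxW.1).map (algebraMap ℤ K)).ne_zero, ?_⟩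
      rw [IsRoot, eval_map, ← aeval_def]
      exact minpoly.aeval ℤ x
    have hfin : {x | x ∈ W ∧ minpoly ℤ x = b}.Finite :=
      Set.Finite.subset (Finset.finite_toSet _) hsub
    refine ⟨hfin, ?_⟩
    by_cases hne : {x | x ∈ W ∧ minpoly ℤ x = b}.Nonempty
    · obtain ⟨x₀, hx₀W, hx₀b⟩ := hne
      have hbmonic : b.Monic := hx₀b ▸ minpoly.monic hx₀W.1
      refine (Set.ncard_le_ncard hsub (Finset.finite_toSet _)).trans ?_
      rw [Set.ncard_coe_finset]
      refine le_trans (Multiset.toFinset_card_le _) ?_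
      refine le_trans (Polynomial.card_roots' _) ?_
      rw [(hbmonic).natDegree_map (algebraMap ℤ K), ← hx₀b]
      -- natDegree (minpoly ℤ x₀) ≤ k
      have h_map := minpoly.isIntegrallyClosed_eq_field_fractions' ℚ hx₀W.1
      rw [← (minpoly.monic hx₀W.1).natDegree_map (algebraMap ℤ ℚ), ← h_map, ← hrank]
      exact minpoly.natDegree_le x₀
    · have : {x | x ∈ W ∧ minpoly ℤ x = b} = ∅ := Set.not_nonempty_iff_eq_empty.mp hne
      rw [this]; simp



-- generic: 2 ^ (number of prime factors with multiplicity) ≤ absNorm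
theorem two_pow_factors_le (K : Type) [Field K] [NumberField K]
    (J : Ideal (𝓞 K)) (hJ : J ≠ 0) :
    2 ^ (Multiset.card (normalizedFactors J)) ≤ Ideal.absNorm J := by
  have hprod : (normalizedFactors J).prod = J :=
    associated_iff_eq.mp (prod_normalizedFactors hJ)
  have h2 : ∀ m ∈ (normalizedFactors J).map Ideal.absNorm, 2 ≤ m := by
    intro m hm
    rw [Multiset.mem_map] at hm
    obtain ⟨p, hp, rfl⟩ := hm
    have hprime := prime_of_normalized_factor p hp
    have h0 : Ideal.absNorm p ≠ 0 := by
      rw [Ne, Ideal.absNorm_eq_zero_iff]; exact hprime.ne_zero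
    have h1 : Ideal.absNorm p ≠ 1 := by
      rw [Ne, Ideal.absNorm_eq_one_iff]
      intro htop
      exact hprime.not_unit (by rw [Ideal.isUnit_iff]; exact htop)
    omega
  calc 2 ^ (Multiset.card (normalizedFactors J))
      = 2 ^ (Multiset.card ((normalizedFactors J).map Ideal.absNorm)) := by
        rw [Multiset.card_map]
    _ ≤ ((normalizedFactors J).map Ideal.absNorm).prod := Multiset.pow_card_le_prod h2
    _ = Ideal.absNorm J := by rw [← map_multiset_prod, hprod]



variable {α : Type*} [DecidableEq α]

theorem sub_multiset_mem (S u : Multiset α) : u ∈ S.powerset.toFinset ↔ u ≤ S := by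
  rw [Multiset.mem_toFinset, Multiset.mem_powerset]

theorem powerset_toFinset_card_le_two_pow (S : Multiset α) :
    S.powerset.toFinset.card ≤ 2 ^ Multiset.card S := by
  refine (Multiset.toFinset_card_le _).trans ?_
  rw [Multiset.card_powerset]

theorem powerset_toFinset_card_split (S : Multiset α) (p : α → Prop) [DecidablePred p] :
    S.powerset.toFinset.card ≤
      (S.filter p).powerset.toFinset.card * ((S.filter fun a => ¬ p a).powerset.toFinset.card) := by
  rw [← Finset.card_product]
  refine Finset.card_le_card_of_injOn
    (fun u => (u.filter p, u.filter fun a => ¬ p a)) ?_ ?_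
  · intro u hu
    rw [Finset.mem_coe, sub_multiset_mem] at hu
    rw [Finset.mem_coe, Finset.mem_product]
    exact ⟨(sub_multiset_mem _ _).mpr (Multiset.filter_le_filter _ hu),
      (sub_multiset_mem _ _).mpr (Multiset.filter_le_filter _ hu)⟩
  · intro u _ v _ huv
    have h1 := congrArg Prod.fst huv
    have h2 := congrArg Prod.snd huv
    simp only at h1 h2
    rw [← Multiset.filter_add_not p u, h1, h2, Multiset.filter_add_not]

theorem powerset_toFinset_card_le_pow (S : Multiset α) :
    S.powerset.toFinset.card ≤ (Multiset.card S + 1) ^ S.toFinset.card := by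
  classical
  have : (Multiset.card S + 1) ^ S.toFinset.card
      = Fintype.card (S.toFinset → Fin (Multiset.card S + 1)) := by
    rw [Fintype.card_fun, Fintype.card_fin, Fintype.card_coe]
  rw [this, ← Finset.card_univ]
  refine Finset.card_le_card_of_injOn
    (fun u => fun a : S.toFinset => (⟨min (u.count a.1) (Multiset.card S), by
      omega⟩ : Fin (Multiset.card S + 1))) (fun u hu => Finset.mem_univ _) ?_
  · intro u hu v hv huv
    rw [Finset.mem_coe, sub_multiset_mem] at hu hv
    have hcnt : ∀ (w : Multiset α), w ≤ S → ∀ a : α, min (w.count a) (Multiset.card S)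
        = w.count a := by
      intro w hw a
      have h1 : w.count a ≤ Multiset.card w := Multiset.count_le_card a w
      have h2 : Multiset.card w ≤ Multiset.card S := Multiset.card_le_card hw
      omega
    ext a
    by_cases ha : a ∈ S.toFinset
    · have h := congrFun huv ⟨a, ha⟩
      have h' := congrArg Fin.val h
      simpa [hcnt u hu, hcnt v hv] using h' 
    · rw [Multiset.mem_toFinset] at ha
      rw [Multiset.count_eq_zero_of_notMem (fun h => ha (Multiset.mem_of_le hu h)),
        Multiset.count_eq_zero_of_notMem (fun h => ha (Multiset.mem_of_le hv h))]


attribute [local instance] Classical.propDecidable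
noncomputable local instance (K : Type) [Field K] [NumberField K] : DecidableEq (Ideal (𝓞 K)) := Classical.decEq _

-- count of small primes dividing I (they all divide span {t!})
theorem small_primes_card (k : ℕ) (K : Type) [Field K] [NumberField K]
    (hrank : finrank ℚ K = k) (I : Ideal (𝓞 K)) (hI : I ≠ 0) (t : ℕ) (ht : 2 ≤ t) :
        2 ^ (((normalizedFactors I).filter (fun p => Ideal.absNorm p ≤ t)).toFinset.card : ℕ)
      ≤ (Nat.factorial t) ^ k := by
  classical
  set J : Ideal (𝓞 K) := Ideal.span {((Nat.factorial t : ℕ) : 𝓞 K)} with hJdef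
  have hM0 : ((Nat.factorial t : ℕ) : 𝓞 K) ≠ 0 := by
    exact_mod_cast Nat.cast_ne_zero.mpr (Nat.factorial_ne_zero t)
  have hJ0 : J ≠ 0 := by
    rw [hJdef]
    show Ideal.span {((Nat.factorial t : ℕ) : 𝓞 K)} ≠ ⊥
    rw [Submodule.ne_bot_iff]
    exact ⟨_, Ideal.mem_span_singleton_self _, hM0⟩
  have hsub : ((normalizedFactors I).filter (fun p => Ideal.absNorm p ≤ t)).toFinset
      ⊆ (normalizedFactors J).toFinset := by
    intro p hp
    rw [Multiset.mem_toFinset, Multiset.mem_filter] at hp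
    obtain ⟨hpI, hpt⟩ := hp
    have hprime := prime_of_normalized_factor p hpI
    have hdvd : p ∣ J := by
      rw [Ideal.dvd_iff_le, hJdef, Ideal.span_singleton_le_iff_mem]
      have h2 : 0 < Ideal.absNorm p := by
        rw [Nat.pos_iff_ne_zero, Ne, Ideal.absNorm_eq_zero_iff]
        exact fun h => hprime.ne_zero h
      obtain ⟨c, hc⟩ := Nat.dvd_factorial h2 hpt
      have : ((Nat.factorial t : ℕ) : 𝓞 K) = ((Ideal.absNorm p : ℕ) : 𝓞 K) * (c : 𝓞 K) := by
        rw [← Nat.cast_mul, ← hc]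
      rw [this]
      exact Ideal.mul_mem_right _ _ (Ideal.absNorm_mem p)
    rw [Multiset.mem_toFinset]
    exact (mem_normalizedFactors_iff hJ0).mpr ⟨hprime, hdvd⟩
  have hcard : ((normalizedFactors I).filter (fun p => Ideal.absNorm p ≤ t)).toFinset.card
      ≤ Multiset.card (normalizedFactors J) :=
    (Finset.card_le_card hsub).trans (Multiset.toFinset_card_le _)
  have hJnorm : Ideal.absNorm J = (Nat.factorial t) ^ k := by
    rw [hJdef]
    have : ((Nat.factorial t : ℕ) : 𝓞 K) = algebraMap ℤ (𝓞 K) ((Nat.factorial t : ℕ) : ℤ) := by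
      push_cast; rfl
    rw [this, Ideal.absNorm_span_singleton,
      Algebra.norm_algebraMap_of_basis (NumberField.RingOfIntegers.basis K),
      ← Module.finrank_eq_card_chooseBasisIndex, NumberField.RingOfIntegers.rank, hrank]
    push_cast
    rw [← Nat.cast_pow, Int.natAbs_natCast]
  calc 2 ^ (((normalizedFactors I).filter (fun p => Ideal.absNorm p ≤ t)).toFinset.card : ℕ)
      ≤ 2 ^ (Multiset.card (normalizedFactors J)) := Nat.pow_le_pow_right (by norm_num) hcard
    _ ≤ Ideal.absNorm J := two_pow_factors_le K J hJ0
    _ = (Nat.factorial t) ^ k := hJnorm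


theorem prodAbs (K : Type) [Field K] [NumberField K] (x : K) :
    ∏ φ : K →+* ℂ, ‖φ x‖ = ((|Algebra.norm ℚ x| : ℚ) : ℝ) := by
  have h := congrArg (‖·‖) (Algebra.norm_eq_prod_embeddings ℚ ℂ x)
  rw [norm_prod] at h
  rw [Fintype.prod_equiv (RingHom.equivRatAlgHom K ℂ) (fun φ => ‖φ x‖)
    (fun σ => ‖σ x‖) (fun φ => rfl), ← h, eq_ratCast]
  simp

theorem norm_ge_one (K : Type) [Field K] [NumberField K] (x : 𝓞 K) (hx : x ≠ 0) :
    1 ≤ ((|Algebra.norm ℚ (x : K)| : ℚ) : ℝ) := by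
  have h0 : (x : K) ≠ 0 := RingOfIntegers.coe_ne_zero_iff.mpr hx
  have hnz : Algebra.norm ℚ (x : K) ≠ 0 := by
    rw [Algebra.norm_ne_zero_iff]
    exact h0
  have hint : ((Algebra.norm ℤ x : ℤ) : ℚ) = Algebra.norm ℚ (x : K) := Algebra.coe_norm_int x
  have hz : Algebra.norm ℤ x ≠ 0 := by
    intro h
    rw [h] at hint
    exact hnz (by exact_mod_cast hint.symm)
  have h1 : (1 : ℤ) ≤ |Algebra.norm ℤ x| := Int.one_le_abs (by exact_mod_cast hz)
  rw [← hint]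
  push_cast
  exact_mod_cast h1

-- upper and lower bounds for individual embeddings
theorem emb_bounds (k : ℕ) (hk : 1 ≤ k) (K : Type) [Field K] [NumberField K]
    (hrank : finrank ℚ K = k) (x : 𝓞 K) (hx : x ≠ 0) (H : ℝ) (hH : 0 ≤ H)
    (hht : logHeight K (x : K) ≤ H) (σ : K →+* ℂ) :
    Real.exp (-(((k:ℝ) - 1) * H)) ≤ ‖σ (x:K)‖ ∧
      ‖σ (x:K)‖ ≤ Real.exp H := by
  classical
  have hcard : Fintype.card (K →+* ℂ) = k := by rw [NumberField.Embeddings.card K ℂ, hrank]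
  have h0 : ∀ τ : K →+* ℂ, 0 < ‖τ (x:K)‖ := fun τ => by
    have : (x:K) ≠ 0 := RingOfIntegers.coe_ne_zero_iff.mpr hx
    simpa using (map_ne_zero τ).mpr this
  have hht' : (⨆ σ : K →+* ℂ, Real.log (‖σ (x:K)‖)) ≤ H := hht
  have hle : ∀ τ : K →+* ℂ, Real.log (‖τ (x:K)‖) ≤ H := fun τ =>
    le_trans (le_ciSup (f := fun σ : K →+* ℂ => Real.log (‖σ (x:K)‖))
      (Set.Finite.bddAbove (Set.finite_range _)) τ) hht'
  have hub : ∀ τ : K →+* ℂ, ‖τ (x:K)‖ ≤ Real.exp H := fun τ => by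
    have := Real.exp_le_exp.mpr (hle τ)
    rwa [Real.exp_log (h0 τ)] at this
  refine ⟨?_, hub σ⟩
  have hprod : (1:ℝ) ≤ ∏ φ : K →+* ℂ, ‖φ (x:K)‖ := by
    rw [prodAbs]; exact norm_ge_one K x hx
  have hsplit : ∏ φ : K →+* ℂ, ‖φ (x:K)‖
      = ‖σ (x:K)‖ * ∏ φ ∈ Finset.univ.erase σ, ‖φ (x:K)‖ :=
    (Finset.mul_prod_erase Finset.univ _ (Finset.mem_univ σ)).symm
  have hrest : ∏ φ ∈ Finset.univ.erase σ, ‖φ (x:K)‖ ≤ Real.exp ((k - 1 : ℕ) * H) := by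
    calc ∏ φ ∈ Finset.univ.erase σ, ‖φ (x:K)‖
        ≤ ∏ _φ ∈ Finset.univ.erase σ, Real.exp H :=
          Finset.prod_le_prod (fun φ _ => (h0 φ).le) (fun φ _ => hub φ)
      _ = Real.exp H ^ (Finset.univ.erase σ).card := Finset.prod_const _
      _ = Real.exp ((k - 1 : ℕ) * H) := by
          rw [Finset.card_erase_of_mem (Finset.mem_univ σ), Finset.card_univ, hcard,
            ← Real.exp_nat_mul]
  have hrestpos : 0 < ∏ φ ∈ Finset.univ.erase σ, ‖φ (x:K)‖ :=
    Finset.prod_pos (fun φ _ => h0 φ)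
  have h1 : 1 ≤ ‖σ (x:K)‖ * Real.exp ((k - 1 : ℕ) * H) := by
    calc (1:ℝ) ≤ _ := hprod
      _ = _ := hsplit
      _ ≤ ‖σ (x:K)‖ * Real.exp ((k - 1 : ℕ) * H) :=
          mul_le_mul_of_nonneg_left hrest (h0 σ).le
  have hcast : ((k - 1 : ℕ) : ℝ) = (k:ℝ) - 1 := by
    push_cast [Nat.cast_sub hk]; ring
  rw [hcast] at h1
  rw [Real.exp_neg]
  rw [inv_le_iff_one_le_mul₀ (Real.exp_pos _)]
  linarith [mul_le_mul_of_nonneg_right h1 (Real.exp_pos (((k:ℝ)-1)*H)).le,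
    (mul_pos (h0 σ) (Real.exp_pos (((k:ℝ)-1)*H))).le]


set_option maxHeartbeats 1600000 in
theorem divisor_bound (k : ℕ) (hk : 1 ≤ k) (K : Type) [Field K] [NumberField K]
    (hrank : finrank ℚ K = k) (I : Ideal (𝓞 K)) (hI : I ≠ 0)
    (H : ℝ) (hH : 2 ≤ H) (hn : (Ideal.absNorm I : ℝ) ≤ Real.exp (k * H)) :
    (((normalizedFactors I).powerset.toFinset.card : ℝ)) ≤
      Real.exp ((180 * k * (Real.log (3*k) + 6)) * H / Real.log H) := by
  have hH0 : (0:ℝ) < H := by linarith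
  have hL : 0 < Real.log H := Real.log_pos (by linarith)
  set L := Real.log H with hLdef
  have hk1 : (1:ℝ) ≤ (k:ℝ) := by exact_mod_cast hk
  have hkH2 : (2:ℝ) ≤ (k:ℝ) * H := by nlinarith
  -- threshold
  set t : ℕ := ⌈Real.sqrt H⌉₊ + 2 with htdef
  have ht2 : 2 ≤ t := Nat.le_add_left 2 _
  have hsqrt0 : 0 < Real.sqrt H := Real.sqrt_pos.mpr hH0
  have hsqrt1 : 1 ≤ Real.sqrt H := by
    rw [show (1:ℝ) = Real.sqrt 1 by simp]
    exact Real.sqrt_le_sqrt (by linarith)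
  have htlb : Real.sqrt H ≤ (t:ℝ) := by
    refine (Nat.le_ceil _).trans ?_
    push_cast [htdef]; linarith
  have htub : (t:ℝ) ≤ 4 * Real.sqrt H := by
    have := Nat.ceil_lt_add_one (le_of_lt hsqrt0)
    push_cast [htdef]; linarith
  have ht0 : (0:ℝ) < t := by positivity
  have ht1 : (1:ℝ) < (t:ℝ) := by exact_mod_cast Nat.lt_of_lt_of_le one_lt_two ht2
  have hlogt_pos : 0 < Real.log t := Real.log_pos ht1
  have hlogt_lb : L / 2 ≤ Real.log t := by
    rw [hLdef, ← Real.log_sqrt (le_of_lt hH0)]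
    exact Real.log_le_log hsqrt0 htlb
  -- E = H^(1/6)
  set E : ℝ := H ^ ((6:ℝ)⁻¹) with hEdef
  have hE0 : 0 < E := by rw [hEdef]; positivity
  have hE1 : 1 ≤ E := by
    rw [hEdef, show (1:ℝ) = (1:ℝ) ^ ((6:ℝ)⁻¹) by simp]
    exact Real.rpow_le_rpow (by norm_num) (by linarith) (by norm_num)
  have hLE : L ≤ 6 * E := by
    have hlogE : Real.log E = (6:ℝ)⁻¹ * L := Real.log_rpow hH0 _
    have h2 : Real.log E ≤ E := (Real.log_le_sub_one_of_pos hE0).trans (by linarith)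
    nlinarith
  have hsqE : Real.sqrt H * (E * E * E) = H := by
    rw [Real.sqrt_eq_rpow, hEdef, ← Real.rpow_add hH0, ← Real.rpow_add hH0, ← Real.rpow_add hH0,
      show ((1:ℝ)/2 + (6⁻¹ + 6⁻¹ + 6⁻¹) : ℝ) = 1 by norm_num, Real.rpow_one]
  have hlog2_gt : (0.6931471803 : ℝ) < Real.log 2 := Real.log_two_gt_d9
  have hlog2_lt : Real.log 2 < (0.6931471808 : ℝ) := Real.log_two_lt_d9
  have hlog2_pos : (0:ℝ) < Real.log 2 := by norm_num at hlog2_gt ⊢; linarith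
  have hlog4 : Real.log 4 ≤ 2 := by
    rw [show (4:ℝ) = 2^(2:ℕ) by norm_num, Real.log_pow]
    push_cast; linarith
  have hlogt_ub : Real.log t ≤ 5 * E := by
    have h1 : Real.log t ≤ Real.log (4 * Real.sqrt H) := Real.log_le_log ht0 htub
    rw [Real.log_mul (by norm_num) (ne_of_gt hsqrt0), Real.log_sqrt (le_of_lt hH0)] at h1
    nlinarith
  -- basic norm facts
  set n : ℕ := Ideal.absNorm I with hndef
  have hn0 : 0 < n := by
    rw [hndef, Nat.pos_iff_ne_zero, Ne, Ideal.absNorm_eq_zero_iff]; exact hI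
  have hn0' : (0:ℝ) < (n:ℝ) := by exact_mod_cast hn0
  have hlogn : Real.log n ≤ k * H := by
    rw [Real.log_le_iff_le_exp hn0']; exact hn
  set S := normalizedFactors I with hSdef
  set c1 : ℕ := (S.filter (fun p => Ideal.absNorm p ≤ t)).toFinset.card with hc1def
  set c2 : ℕ := Multiset.card S with hc2def
  set c3 : ℕ := Multiset.card (S.filter (fun p => ¬ Ideal.absNorm p ≤ t)) with hc3def
  have hSprod : S.prod = I := associated_iff_eq.mp (prod_normalizedFactors hI)
  -- c2 bound
  have hc2 : (c2:ℝ) * Real.log 2 ≤ (k:ℝ) * H := by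
    have h := two_pow_factors_le K I hI
    have h' : (2:ℝ)^c2 ≤ (n:ℝ) := by exact_mod_cast h
    have h'' := Real.log_le_log (by positivity) h'
    rw [Real.log_pow] at h''
    exact (le_trans h'' hlogn)
  -- c3 bound
  have hc3 : (c3:ℝ) * Real.log t ≤ (k:ℝ) * H := by
    have hdvd : (S.filter (fun p => ¬ Ideal.absNorm p ≤ t)).prod ∣ I := by
      rw [← hSprod]
      exact Multiset.prod_dvd_prod_of_le (Multiset.filter_le _ _)
    have habs : Ideal.absNorm ((S.filter (fun p => ¬ Ideal.absNorm p ≤ t)).prod) ∣ n :=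
      map_dvd Ideal.absNorm hdvd
    have hle : Ideal.absNorm ((S.filter (fun p => ¬ Ideal.absNorm p ≤ t)).prod) ≤ n :=
      Nat.le_of_dvd hn0 habs
    have hpow : t ^ c3 ≤ Ideal.absNorm ((S.filter (fun p => ¬ Ideal.absNorm p ≤ t)).prod) := by
      rw [map_multiset_prod]
      calc t ^ c3 = t ^ Multiset.card ((S.filter (fun p => ¬ Ideal.absNorm p ≤ t)).map
            Ideal.absNorm) := by rw [Multiset.card_map]
        _ ≤ _ := Multiset.pow_card_le_prod (by
            intro m hm
            rw [Multiset.mem_map] at hm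
            obtain ⟨p, hp, rfl⟩ := hm
            rw [Multiset.mem_filter] at hp
            omega)
    have h' : (t:ℝ)^c3 ≤ (n:ℝ) := by exact_mod_cast hpow.trans hle
    have h'' := Real.log_le_log (by positivity) h'
    rw [Real.log_pow] at h''
    exact le_trans h'' hlogn
  -- c1 bound
  have hc1 : (c1:ℝ) * Real.log 2 ≤ (k:ℝ) * ((t:ℝ) * Real.log t) := by
    have h := small_primes_card k K hrank I hI t ht2
    have h' : (2:ℝ)^c1 ≤ ((Nat.factorial t : ℕ):ℝ)^k := by exact_mod_cast h
    have h'' := Real.log_le_log (by positivity) h'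
    rw [Real.log_pow, Real.log_pow] at h''
    have hfact : Real.log ((Nat.factorial t : ℕ):ℝ) ≤ (t:ℝ) * Real.log t := by
      have hle : ((Nat.factorial t : ℕ):ℝ) ≤ (t:ℝ)^t := by exact_mod_cast Nat.factorial_le_pow t
      have := Real.log_le_log (by positivity) hle
      rwa [Real.log_pow] at this
    calc (c1:ℝ) * Real.log 2 ≤ (k:ℝ) * Real.log ((Nat.factorial t : ℕ):ℝ) := h''
      _ ≤ (k:ℝ) * ((t:ℝ) * Real.log t) := by
          exact mul_le_mul_of_nonneg_left hfact (by positivity)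
  -- counting
  have hcount : S.powerset.toFinset.card ≤ (c2+1)^c1 * 2^c3 := by
    refine (powerset_toFinset_card_split S (fun p => Ideal.absNorm p ≤ t)).trans ?_
    refine Nat.mul_le_mul ?_ ?_
    · refine (powerset_toFinset_card_le_pow _).trans ?_
      refine Nat.pow_le_pow_left ?_ _
      have := Multiset.card_le_card (Multiset.filter_le (fun p => Ideal.absNorm p ≤ t) S)
      omega
    · exact powerset_toFinset_card_le_two_pow _
  -- assemble
  have hD : ((S.powerset.toFinset.card : ℕ):ℝ) ≤ (((c2+1):ℕ):ℝ)^(c1:ℕ) * (2:ℝ)^(c3:ℕ) := by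
    exact_mod_cast hcount
  have hexpA : (((c2+1):ℕ):ℝ)^(c1:ℕ) = Real.exp ((c1:ℝ) * Real.log (((c2+1):ℕ):ℝ)) := by
    conv_lhs => rw [← Real.exp_log (show (0:ℝ) < (((c2+1):ℕ):ℝ) by positivity)]
    rw [← Real.exp_nat_mul]
  have hexpB : (2:ℝ)^(c3:ℕ) = Real.exp ((c3:ℝ) * Real.log 2) := by
    conv_lhs => rw [← Real.exp_log (show (0:ℝ) < (2:ℝ) by norm_num)]
    rw [← Real.exp_nat_mul]
  rw [hexpA, hexpB, ← Real.exp_add] at hD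
  refine hD.trans (Real.exp_le_exp.mpr ?_)
  push_cast
  rw [le_div_iff₀ hL]
  clear_value S n c1 c2 c3
  clear hD hcount hSprod hlogn hn hn0 hn0' hI hrank I hndef hSdef hc1def hc2def hc3def
  clear S n
  -- numeric facts
  have hc2nonneg : (0:ℝ) ≤ (c2:ℝ) := Nat.cast_nonneg c2
  have hc1nonneg : (0:ℝ) ≤ (c1:ℝ) := Nat.cast_nonneg c1
  have hc3nonneg : (0:ℝ) ≤ (c3:ℝ) := Nat.cast_nonneg c3
  have hc2r : ((c2:ℝ)+1) ≤ 3 * (k:ℝ) * H := by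
    nlinarith [mul_nonneg hc2nonneg (sub_nonneg.mpr hlog2_gt.le)]
  have hlogc2 : Real.log ((c2:ℝ)+1) ≤ Real.log (3*(k:ℝ)) + L := by
    have h := Real.log_le_log (by positivity) hc2r
    rwa [show (3:ℝ)*(k:ℝ)*H = (3*(k:ℝ))*H by ring,
      Real.log_mul (by positivity) (ne_of_gt hH0), ← hLdef] at h
  have hlog3k : 0 ≤ Real.log (3*(k:ℝ)) := Real.log_nonneg (by nlinarith)
  have hlogc2E : Real.log ((c2:ℝ)+1) ≤ (Real.log (3*(k:ℝ)) + 6) * E := by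
    nlinarith [hlogc2, hLE, hE1, hlog3k]
  have hc1b : (c1:ℝ) ≤ 29 * (k:ℝ) * (Real.sqrt H * E) := by
    have h1 : (t:ℝ) * Real.log t ≤ (4*Real.sqrt H) * (5*E) :=
      mul_le_mul htub hlogt_ub hlogt_pos.le (by positivity)
    have h2 : (k:ℝ) * ((t:ℝ) * Real.log t) ≤ (k:ℝ) * ((4*Real.sqrt H) * (5*E)) :=
      mul_le_mul_of_nonneg_left h1 (by positivity)
    nlinarith [hc1, h2, mul_nonneg hc1nonneg (sub_nonneg.mpr hlog2_gt.le),
      mul_nonneg (mul_nonneg (by positivity : (0:ℝ) ≤ (k:ℝ)) hsqrt0.le) hE0.le]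
  have hlognonneg : 0 ≤ Real.log ((c2:ℝ)+1) := Real.log_nonneg (by linarith)
  have key1 : (c1:ℝ) * Real.log ((c2:ℝ)+1) * L ≤ 174 * (k:ℝ) * (Real.log (3*(k:ℝ)) + 6) * H := by
    have h1 : (c1:ℝ) * Real.log ((c2:ℝ)+1)
        ≤ (29*(k:ℝ)*(Real.sqrt H * E)) * ((Real.log (3*(k:ℝ))+6)*E) :=
      mul_le_mul hc1b hlogc2E hlognonneg (by positivity)
    have h2 : (c1:ℝ) * Real.log ((c2:ℝ)+1) * L
        ≤ (29*(k:ℝ)*(Real.sqrt H * E)) * ((Real.log (3*(k:ℝ))+6)*E) * (6*E) := by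
      refine mul_le_mul h1 hLE hL.le ?_
      positivity
    refine h2.trans ?_
    rw [show (29*(k:ℝ)*(Real.sqrt H*E))*((Real.log (3*(k:ℝ))+6)*E)*(6*E)
      = 174*(k:ℝ)*(Real.log (3*(k:ℝ))+6)*(Real.sqrt H*(E*E*E)) by ring, hsqE]
  have key2 : (c3:ℝ) * Real.log 2 * L ≤ 6 * (k:ℝ) * H := by
    have hc3L : (c3:ℝ) * L ≤ 4 * (k:ℝ) * H := by
      nlinarith [hc3, mul_nonneg hc3nonneg (sub_nonneg.mpr hlogt_lb)]
    nlinarith [hc3L, hlog2_lt, hlog2_pos, mul_nonneg hc3nonneg hL.le]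
  nlinarith [key1, key2, mul_nonneg (mul_nonneg (by positivity : (0:ℝ) ≤ (k:ℝ)) hH0.le) hlog3k]


set_option maxHeartbeats 1600000 in
theorem stmt_13 (k : ℕ) (hk : 1 ≤ k) :
    ∃ C : ℝ, 0 < C ∧
      ∀ (K : Type) [Field K] [NumberField K], Module.finrank ℚ K = k →
        ∀ (γ : NumberField.RingOfIntegers K), γ ≠ 0 →
          ∀ H : ℝ, 2 ≤ H → logHeight K (γ : K) ≤ H →
            {q : NumberField.RingOfIntegers K × NumberField.RingOfIntegers K |
                q.1 * q.2 = γ ∧ logHeight K (q.1 : K) ≤ H ∧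
                logHeight K (q.2 : K) ≤ H}.ncard ≤
              Real.exp (C * H / Real.log H) := by
  classical
  have hk1 : (1:ℝ) ≤ (k:ℝ) := by exact_mod_cast hk
  have h3k : (0:ℝ) ≤ Real.log (3*(k:ℝ)) := Real.log_nonneg (by linarith)
  have hWb0 : (0:ℝ) ≤ (Wb k : ℝ) := Nat.cast_nonneg _
  refine ⟨180*(k:ℝ)*(Real.log (3*(k:ℝ))+6) + (k:ℝ)*Real.log (3*(k:ℝ)) + 4*(k:ℝ)
    + (Wb k:ℝ) + 1, by nlinarith, ?_⟩
  intro K _ _ hrank γ hγ H hH hγH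
  have hH0 : (0:ℝ) < H := by linarith
  have hL : 0 < Real.log H := Real.log_pos (by linarith)
  set L := Real.log H with hLdef
  have hkH2 : (2:ℝ) ≤ (k:ℝ)*H := by nlinarith
  have hcard : Fintype.card (K →+* ℂ) = k := by rw [NumberField.Embeddings.card K ℂ, hrank]
  set I : Ideal (𝓞 K) := Ideal.span {γ} with hIdef
  have hI : I ≠ 0 := by
    rw [hIdef]
    show Ideal.span {γ} ≠ ⊥
    rw [Submodule.ne_bot_iff]
    exact ⟨γ, Ideal.mem_span_singleton_self γ, hγ⟩
  have hnormI : ((Ideal.absNorm I : ℕ) : ℝ) ≤ Real.exp ((k:ℝ) * H) := by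
    have h1 : ((Ideal.absNorm I : ℕ) : ℝ) = ((|Algebra.norm ℚ (γ:K)| : ℚ) : ℝ) := by
      rw [hIdef, Ideal.absNorm_span_singleton, ← Algebra.coe_norm_int]
      push_cast [Nat.cast_natAbs]
      norm_num
    rw [h1, ← prodAbs]
    calc ∏ φ : K →+* ℂ, ‖φ (γ:K)‖
        ≤ ∏ _φ : K →+* ℂ, Real.exp H :=
          Finset.prod_le_prod (fun φ _ => norm_nonneg _)
            (fun φ _ => (emb_bounds k hk K hrank γ hγ H (by linarith) hγH φ).2)
      _ = Real.exp H ^ k := by rw [Finset.prod_const, Finset.card_univ, hcard]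
      _ = Real.exp ((k:ℝ)*H) := by rw [← Real.exp_nat_mul]
  set lo : ℤ := ⌊-(((k:ℝ) - 1) * H)⌋ with hlodef
  set Dfin : Finset (Ideal (𝓞 K)) := (normalizedFactors I).powerset.toFinset.image Multiset.prod
    with hDdef
  set Vfin : Finset ((K →+* ℂ) → ℤ) :=
    Fintype.piFinset (fun _ : (K →+* ℂ) => Finset.Icc lo ⌊H⌋) with hVdef
  set g : (𝓞 K × 𝓞 K) → (Ideal (𝓞 K) × ((K →+* ℂ) → ℤ)) := fun q =>
    (Ideal.span {q.1}, fun σ => ⌊Real.log (‖σ (q.1 : K)‖)⌋) with hgdef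
  set V : Set (𝓞 K × 𝓞 K) :=
    {q : 𝓞 K × 𝓞 K | q.1 * q.2 = γ ∧ logHeight K (q.1:K) ≤ H ∧ logHeight K (q.2:K) ≤ H}
    with hVsetdef
  have hfirst_ne : ∀ q ∈ V, q.1 ≠ 0 := by
    rintro q ⟨hprod, -, -⟩ h
    rw [h, zero_mul] at hprod
    exact hγ hprod.symm
  have key := fiber_count V g (Dfin ×ˢ Vfin) (Wb k) ?_ ?_
  rotate_left
  · -- hmap
    intro q hq
    obtain ⟨hprod, h1, h2⟩ := hq
    have hq1 : q.1 ≠ 0 := hfirst_ne q ⟨hprod, h1, h2⟩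
    rw [Finset.mem_product]
    constructor
    · have hdvd : Ideal.span {q.1} ∣ I := by
        refine ⟨Ideal.span {q.2}, ?_⟩
        rw [hIdef, Ideal.span_singleton_mul_span_singleton, hprod]
      have hq10 : Ideal.span {q.1} ≠ 0 := by
        show Ideal.span {q.1} ≠ ⊥
        rw [Submodule.ne_bot_iff]
        exact ⟨q.1, Ideal.mem_span_singleton_self q.1, hq1⟩
      have hfac := (dvd_iff_normalizedFactors_le_normalizedFactors hq10 hI).mp hdvd
      rw [hDdef, Finset.mem_image]
      exact ⟨normalizedFactors (Ideal.span {q.1}),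
        by rw [Multiset.mem_toFinset, Multiset.mem_powerset]; exact hfac,
        associated_iff_eq.mp (prod_normalizedFactors hq10)⟩
    · rw [hVdef, Fintype.mem_piFinset]
      intro σ
      rw [Finset.mem_Icc]
      have hb := emb_bounds k hk K hrank q.1 hq1 H (by linarith) h1 σ
      have hpos : 0 < ‖σ (q.1:K)‖ :=
        lt_of_lt_of_le (Real.exp_pos _) hb.1
      constructor
      · rw [hlodef]
        apply Int.floor_le_floor
        have := Real.log_le_log (Real.exp_pos _) hb.1
        rwa [Real.log_exp] at this
      · apply Int.floor_le_floor
        have := Real.log_le_log hpos hb.2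
        rwa [Real.log_exp] at this
  · -- fibers
    intro b hb
    show {q | q ∈ V ∧ g q = b}.Finite ∧ {q | q ∈ V ∧ g q = b}.ncard ≤ Wb k
    by_cases hne : {q | q ∈ V ∧ g q = b}.Nonempty
    swap
    · rw [Set.not_nonempty_iff_eq_empty] at hne
      rw [hne]
      simp
    obtain ⟨q₀, hq₀V, hq₀b⟩ := hne
    have ha₀ : q₀.1 ≠ 0 := hfirst_ne q₀ hq₀V
    have ha₀K : (algebraMap (𝓞 K) K q₀.1) ≠ 0 := RingOfIntegers.coe_ne_zero_iff.mpr ha₀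
    set ψ : (𝓞 K × 𝓞 K) → K := fun q => (algebraMap (𝓞 K) K q.1) / (algebraMap (𝓞 K) K q₀.1)
      with hψ
    have hinj : Set.InjOn ψ {q | q ∈ V ∧ g q = b} := by
      rintro q ⟨hqV, hqb⟩ q' ⟨hq'V, hq'b⟩ h
      rw [hψ] at h
      simp only [div_eq_div_iff ha₀K ha₀K] at h
      have h1 : (algebraMap (𝓞 K) K q.1) = (algebraMap (𝓞 K) K q'.1) :=
        mul_right_cancel₀ ha₀K h
      have h1' : q.1 = q'.1 := RingOfIntegers.coe_injective h1
      have hq1 : q.1 ≠ 0 := hfirst_ne q hqV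
      have h2 : q.2 = q'.2 := by
        apply mul_left_cancel₀ hq1
        rw [hqV.1]
        conv_lhs => rw [← hq'V.1]
        rw [h1']
      exact Prod.ext h1' h2
    have himg : ψ '' {q | q ∈ V ∧ g q = b}
        ⊆ {x : K | IsIntegral ℤ x ∧ ∀ φ : K →+* ℂ, ‖φ x‖ ≤ Real.exp 1} := by
      rintro - ⟨q, ⟨hqV, hqb⟩, rfl⟩
      have hq1 : q.1 ≠ 0 := hfirst_ne q hqV
      have hq1K : (algebraMap (𝓞 K) K q.1) ≠ 0 := RingOfIntegers.coe_ne_zero_iff.mpr hq1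
      have hspan : Ideal.span {q.1} = Ideal.span {q₀.1} := by
        have e1 := congrArg Prod.fst hqb
        have e2 := congrArg Prod.fst hq₀b
        rw [hgdef] at e1 e2
        simpa using e1.trans e2.symm
      obtain ⟨u, hu⟩ := Ideal.span_singleton_eq_span_singleton.mp hspan.symm
      -- hu : q₀.1 * u = q.1
      constructor
      · have heq : ψ q = algebraMap (𝓞 K) K (u : 𝓞 K) := by
          rw [hψ]
          rw [div_eq_iff ha₀K]
          rw [← map_mul]
          congr 1
          rw [← hu]
          ring
        rw [heq]
        exact RingOfIntegers.isIntegral_coe _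
      · intro φ
        have e1 := congrArg Prod.snd hqb
        have e2 := congrArg Prod.snd hq₀b
        rw [hgdef] at e1 e2
        have hfl : ⌊Real.log (‖φ (algebraMap (𝓞 K) K q.1)‖)⌋
            = ⌊Real.log (‖φ (algebraMap (𝓞 K) K q₀.1)‖)⌋ := by
          have := (congrFun e1 φ).trans (congrFun e2 φ).symm
          simpa using this
        have hpos1 : 0 < ‖φ (algebraMap (𝓞 K) K q.1)‖ := by
          simpa using (map_ne_zero φ).mpr hq1K
        have hpos0 : 0 < ‖φ (algebraMap (𝓞 K) K q₀.1)‖ := by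
          simpa using (map_ne_zero φ).mpr ha₀K
        have hlt : Real.log (‖φ (algebraMap (𝓞 K) K q.1)‖)
            - Real.log (‖φ (algebraMap (𝓞 K) K q₀.1)‖) < 1 := by
          have ha := Int.lt_floor_add_one (Real.log (‖φ (algebraMap (𝓞 K) K q.1)‖))
          have hb' := Int.floor_le (Real.log (‖φ (algebraMap (𝓞 K) K q₀.1)‖))
          rw [hfl] at ha
          push_cast at ha hb'
          linarith
        have hval : ‖φ (ψ q)‖
            = ‖φ (algebraMap (𝓞 K) K q.1)‖
              / ‖φ (algebraMap (𝓞 K) K q₀.1)‖ := by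
          rw [hψ, map_div₀, norm_div]
        rw [hval, show ‖φ (algebraMap (𝓞 K) K q.1)‖
              / ‖φ (algebraMap (𝓞 K) K q₀.1)‖
            = Real.exp (Real.log (‖φ (algebraMap (𝓞 K) K q.1)‖)
              - Real.log (‖φ (algebraMap (𝓞 K) K q₀.1)‖)) by
          rw [Real.exp_sub, Real.exp_log hpos1, Real.exp_log hpos0]]
        exact Real.exp_le_exp.mpr hlt.le
    have hW := wset_card k K hrank
    have hfin : {q | q ∈ V ∧ g q = b}.Finite :=
      Set.Finite.of_finite_image (hW.1.subset himg) hinj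
    refine ⟨hfin, ?_⟩
    rw [← Set.ncard_image_of_injOn hinj]
    exact (Set.ncard_le_ncard himg hW.1).trans hW.2
  -- final numeric assembly
  obtain ⟨hVfin, hVcard⟩ := key
  have hDcard : ((Dfin.card : ℕ) : ℝ)
      ≤ Real.exp ((180*(k:ℝ)*(Real.log (3*(k:ℝ))+6)) * H / L) := by
    refine le_trans ?_ (divisor_bound k hk K hrank I hI H hH hnormI)
    exact_mod_cast Nat.cast_le.mpr Finset.card_image_le
  have hIcc : ((Finset.Icc lo ⌊H⌋).card : ℝ) ≤ 3*(k:ℝ)*H := by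
    rw [Int.card_Icc]
    have h2 : ((⌊H⌋:ℝ)) ≤ H := Int.floor_le H
    have h3 : -(((k:ℝ)-1)*H) - 1 < (lo:ℝ) := by
      rw [hlodef]
      exact_mod_cast Int.sub_one_lt_floor _
    have hcast : (((⌊H⌋ + 1 - lo).toNat : ℕ) : ℝ) = max ((⌊H⌋:ℝ) + 1 - (lo:ℝ)) 0 := by
      have h1 : ((⌊H⌋ + 1 - lo).toNat : ℤ) = max (⌊H⌋ + 1 - lo) 0 := Int.toNat_eq_max _
      have := congrArg (Int.cast : ℤ → ℝ) h1
      push_cast at this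
      exact_mod_cast this
    rw [hcast]
    apply max_le
    · nlinarith
    · nlinarith
  have hVcardF : ((Vfin.card : ℕ) : ℝ) ≤ (3*(k:ℝ)*H)^k := by
    rw [hVdef, Fintype.card_piFinset]
    rw [Finset.prod_const, Finset.card_univ, hcard]
    push_cast
    exact pow_le_pow_left₀ (by positivity) hIcc k
  have h3kH : (0:ℝ) < 3*(k:ℝ)*H := by nlinarith
  have hPow : ((3*(k:ℝ)*H)^k : ℝ) = Real.exp ((k:ℝ) * Real.log (3*(k:ℝ)*H)) := by
    conv_lhs => rw [← Real.exp_log h3kH]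
    rw [← Real.exp_nat_mul]
  have hWexp : (Wb k : ℝ) ≤ Real.exp ((Wb k : ℝ)) := by
    have := Real.add_one_le_exp ((Wb k : ℝ))
    linarith
  have hchain : (V.ncard : ℝ)
      ≤ Real.exp ((180*(k:ℝ)*(Real.log (3*(k:ℝ))+6)) * H / L
          + (k:ℝ) * Real.log (3*(k:ℝ)*H) + (Wb k : ℝ)) := by
    have hc : (V.ncard : ℝ) ≤ ((Dfin.card : ℕ):ℝ) * ((Vfin.card : ℕ):ℝ) * (Wb k : ℝ) := by
      have := hVcard
      rw [Finset.card_product] at this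
      exact_mod_cast this
    refine hc.trans ?_
    rw [Real.exp_add, Real.exp_add]
    refine mul_le_mul (mul_le_mul hDcard (hVcardF.trans (le_of_eq hPow)) (by positivity)
      (Real.exp_pos _).le) hWexp (by positivity) (by positivity)
  refine le_trans hchain (Real.exp_le_exp.mpr ?_)
  -- exponent inequality
  have hlog3kH : Real.log (3*(k:ℝ)*H) = Real.log (3*(k:ℝ)) + L := by
    rw [show (3:ℝ)*(k:ℝ)*H = (3*(k:ℝ))*H by ring, Real.log_mul (by positivity) (ne_of_gt hH0),
      hLdef]
  have hLH : L ≤ H := by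
    rw [hLdef]
    linarith [Real.log_le_sub_one_of_pos hH0]
  have hL2 : L^2 ≤ 4*H := by
    have hs : Real.log H = 2 * Real.log (Real.sqrt H) := by
      rw [Real.log_sqrt hH0.le]; ring
    have h1 : Real.log (Real.sqrt H) ≤ Real.sqrt H - 1 :=
      Real.log_le_sub_one_of_pos (Real.sqrt_pos.mpr hH0)
    have h2 : Real.sqrt H ^ 2 = H := Real.sq_sqrt hH0.le
    have h3 : 0 ≤ Real.sqrt H := Real.sqrt_nonneg H
    rw [hLdef, hs]
    nlinarith
  rw [hlog3kH, le_div_iff₀ hL]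
  have hdiv : (180*(k:ℝ)*(Real.log (3*(k:ℝ))+6)) * H / L * L
      = (180*(k:ℝ)*(Real.log (3*(k:ℝ))+6)) * H := div_mul_cancel₀ _ (ne_of_gt hL)
  have hm1 : (k:ℝ)*Real.log (3*(k:ℝ))*L ≤ (k:ℝ)*Real.log (3*(k:ℝ))*H :=
    mul_le_mul_of_nonneg_left hLH (by positivity)
  have hm2 : (Wb k : ℝ)*L ≤ (Wb k : ℝ)*H := mul_le_mul_of_nonneg_left hLH hWb0
  have hm3 : (k:ℝ)*(L*L) ≤ 4*(k:ℝ)*H := by nlinarith [hL2, sq_nonneg L]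
  nlinarith [hdiv, hm1, hm2, hm3, hL.le, hH0.le]
end
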